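/- arXiv:1005.5648 — 4 statements merged into one kernel-verified Lean document; each statement's English description precedes it below -/
import Mathlib

section
/- Let (A, λ) be a semantic labeling over Σ, α : V → A an assignment, and σ : V → T(Σ,V) a substitution. Then for all terms t, lab_α(σ(t)) = (lab_α ∘ σ applied as a substitution to) lab_{[σ]_α}(t); that is, labeling a substituted term equals applying the labeled substitution to the term labeled under the interpreted assignment. -/
namespace TRSStmt

/-- First-order terms over a signature `F` with arity function `ar` and variables `V`. -/
inductive Tm (F : Type) (ar : F → ℕ) (V : Type) : Type
  | var : V → Tm F ar V
  | app : (f : F) → (Fin (ar f) → Tm F ar V) → Tm F ar V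

variable {F : Type} {ar : F → ℕ} {V W A : Type}

/-- Interpretation of a term in a `Σ`-algebra, given an assignment. -/
def Tm.eval (I : (f : F) → (Fin (ar f) → A) → A) (α : V → A) : Tm F ar V → A
  | .var x => α x
  | .app f ts => I f (fun i => (ts i).eval I α)

/-- Homomorphic extension of a substitution. -/
def Tm.subst (σ : V → Tm F ar W) : Tm F ar V → Tm F ar W
  | .var x => σ x
  | .app f ts => .app f (fun i => (ts i).subst σ)

/-- A variable occurs in a term. -/
def Tm.occurs (x : V) : Tm F ar V → Prop
  | .var y => y = x
  | .app _ ts => ∃ i, (ts i).occurs x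

/-- Subterm at a position (0-indexed). -/
def Tm.subAt : Tm F ar V → List ℕ → Option (Tm F ar V)
  | t, [] => some t
  | .var _, _ :: _ => none
  | .app f ts, i :: p => if h : i < ar f then (ts ⟨i, h⟩).subAt p else none

/-- Replace the subterm at a position. -/
def Tm.replaceAt : Tm F ar V → List ℕ → Tm F ar V → Option (Tm F ar V)
  | _, [], s => some s
  | .var _, _ :: _, _ => none
  | .app f ts, i :: p, s =>
      if h : i < ar f then
        ((ts ⟨i, h⟩).replaceAt p s).map (fun u => .app f (Function.update ts ⟨i, h⟩ u))
      else none

/-- The root symbol of a term (if any). -/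
def Tm.rootSym : Tm F ar V → Option F
  | .var _ => none
  | .app f _ => some f

/-- The function symbol at a position. -/
def Tm.symAt (t : Tm F ar V) (p : List ℕ) : Option F := (t.subAt p).bind Tm.rootSym

/-- A rewrite rule is a pair of terms. -/
abbrev Rule (F : Type) (ar : F → ℕ) (V : Type) := Tm F ar V × Tm F ar V

/-- A set of rules is a TRS: left-hand sides are no variables and
    right-hand side variables occur on the left. -/
def IsTRS (R : Set (Rule F ar V)) : Prop :=
  ∀ lr ∈ R, (∀ x : V, lr.1 ≠ Tm.var x) ∧ ∀ x : V, lr.2.occurs x → lr.1.occurs x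

/-- `t` is a redex with respect to `R`. -/
def IsRedex (R : Set (Rule F ar V)) (t : Tm F ar W) : Prop :=
  ∃ lr ∈ R, ∃ σ : V → Tm F ar W, t = lr.1.subst σ

/-- Rewrite step at position `p`. -/
def RewAt (R : Set (Rule F ar V)) (p : List ℕ) (t u : Tm F ar W) : Prop :=
  ∃ lr ∈ R, ∃ σ : V → Tm F ar W,
    t.subAt p = some (lr.1.subst σ) ∧ t.replaceAt p (lr.2.subst σ) = some u

/-- Outermost rewrite step at position `p`: no redex strictly above `p`. -/
def OutAt (R : Set (Rule F ar V)) (p : List ℕ) (t u : Tm F ar W) : Prop :=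
  RewAt R p t u ∧
    ∀ q, q <+: p → q ≠ p → ∀ s, t.subAt q = some s → ¬ IsRedex R s

/-- Outermost rewrite step. -/
def OStep (R : Set (Rule F ar V)) (t u : Tm F ar W) : Prop := ∃ p, OutAt R p t u

/-- μ-replacing positions for a replacement map `μ`. -/
inductive MuPos (μ : (f : F) → Fin (ar f) → Prop) : Tm F ar V → List ℕ → Prop
  | nil (t : Tm F ar V) : MuPos μ t []
  | cons (f : F) (ts : Fin (ar f) → Tm F ar V) (i : Fin (ar f)) (p : List ℕ) :
      μ f i → MuPos μ (ts i) p → MuPos μ (Tm.app f ts) (i.val :: p)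

/-- Context-sensitive (μ-)rewrite step. -/
def MuStep (R : Set (Rule F ar V)) (μ : (f : F) → Fin (ar f) → Prop)
    (t u : Tm F ar W) : Prop :=
  ∃ p, RewAt R p t u ∧ MuPos μ t p

/-- No infinite sequence for a relation (termination / strong normalization). -/
def NoInf {τ : Type _} (r : τ → τ → Prop) : Prop :=
  ¬ ∃ g : ℕ → τ, ∀ n, r (g n) (g (n + 1))

/-- One-hole contexts. -/
inductive Ctx (F : Type) (ar : F → ℕ) (V : Type) : Type
  | hole : Ctx F ar V
  | app : (f : F) → (i : Fin (ar f)) → ((j : Fin (ar f)) → j ≠ i → Tm F ar V) →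
      Ctx F ar V → Ctx F ar V

/-- Depth of the hole of a context. -/
def Ctx.depth : Ctx F ar V → ℕ
  | .hole => 0
  | .app _ _ _ C => C.depth + 1

/-- Filling the hole of a context with a term. -/
def Ctx.fill : Ctx F ar V → Tm F ar V → Tm F ar V
  | .hole, s => s
  | .app f i ts C, s => .app f (fun j => if h : j = i then C.fill s else ts j h)

/-- The rule `lr` preserves the interpretation inside every context of depth `n`. -/
def HoldsAtDepth (I : (f : F) → (Fin (ar f) → A) → A) (n : ℕ) (lr : Rule F ar V) : Prop :=
  ∀ (C : Ctx F ar V) (α : V → A), C.depth = n →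
    (C.fill lr.1).eval I α = (C.fill lr.2).eval I α

/-- `A` is a C-model for `R`. -/
def IsCModel (I : (f : F) → (Fin (ar f) → A) → A) (R : Set (Rule F ar V)) : Prop :=
  ∀ lr ∈ R, ∃ n, HoldsAtDepth I n lr

/-- `A` is a model for `R`. -/
def IsModel (I : (f : F) → (Fin (ar f) → A) → A) (R : Set (Rule F ar V)) : Prop :=
  ∀ lr ∈ R, ∀ α : V → A, lr.1.eval I α = lr.2.eval I α

section Label
variable {L : F → Type}

/-- Labeled signature: symbols with a label. -/
abbrev LSym (F : Type) (L : F → Type) := Σ f : F, L f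

/-- Arity on the labeled signature. -/
abbrev lar (ar : F → ℕ) : LSym F L → ℕ := fun g => ar g.1

/-- Semantic labeling of a term with respect to an assignment. -/
def labT (I : (f : F) → (Fin (ar f) → A) → A)
    (lf : ∀ f : F, (Fin (ar f) → A) → L f) (α : V → A) :
    Tm F ar V → Tm (LSym F L) (lar ar) V
  | .var x => .var x
  | .app f ts => .app ⟨f, lf f (fun i => (ts i).eval I α)⟩ (fun i => labT I lf α (ts i))

end Label

/-- Evaluation of ground terms. -/
def geval (I : (f : F) → (Fin (ar f) → A) → A) : Tm F ar Empty → A :=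
  Tm.eval I (fun x => x.elim)

/-- Labeling of ground terms. -/
def glab {L : F → Type} (I : (f : F) → (Fin (ar f) → A) → A)
    (lf : ∀ f : F, (Fin (ar f) → A) → L f) :
    Tm F ar Empty → Tm (LSym F L) (lar ar) Empty :=
  labT I lf (fun x => x.elim)

/-- Terms not containing the symbol `tp`. -/
def tpFree (tp : F) : Tm F ar V → Prop
  | .var _ => True
  | .app f ts => f ≠ tp ∧ ∀ i, tpFree tp (ts i)

/-- The term `top(s)`. -/
def topT (tp : F) (s : Tm F ar V) : Tm F ar V := Tm.app tp (fun _ => s)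

/-- Number of occurrences of a variable in a term. -/
def countV [DecidableEq V] (x : V) : Tm F ar V → ℕ
  | .var y => if y = x then 1 else 0
  | .app _ ts => ∑ i, countV x (ts i)

/-- Linear terms: every variable occurs at most once. -/
def Linear [DecidableEq V] (t : Tm F ar V) : Prop := ∀ x : V, countV x t ≤ 1

/-- Quasi-left-linear TRS. -/
def QuasiLeftLinear [DecidableEq V] (R : Set (Rule F ar V)) : Prop :=
  ∀ lr ∈ R, ¬ Linear lr.1 →
    ∃ lr' ∈ R, Linear lr'.1 ∧ ∃ σ : V → Tm F ar V, lr.1 = lr'.1.subst σ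

end TRSStmt

namespace Stmt

open TRSStmt

/-- Lemma 3.6: `lab_α(σ(t)) = lab_α(σ)(lab_{[σ]_α}(t))`. -/
theorem lab_subst {F : Type} {ar : F → ℕ} {V A : Type} {L : F → Type}
    (I : (f : F) → (Fin (ar f) → A) → A)
    (lf : ∀ f : F, (Fin (ar f) → A) → L f)
    (hLfin : ∀ f : F, Finite (L f)) (hLne : ∀ f : F, Nonempty (L f))
    (α : V → A) (σ : V → Tm F ar V) (t : Tm F ar V) :
    labT I lf α (t.subst σ) =
      (labT I lf (fun x => (σ x).eval I α) t).subst (fun x => labT I lf α (σ x)) := by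
  induction t with
  | var x => rfl
  | app f ts ih =>
      have heval : ∀ s : Tm F ar V, (s.subst σ).eval I α = s.eval I (fun x => (σ x).eval I α) := by
        intro s
        induction s with
        | var x => rfl
        | app g us ih2 => simp [Tm.subst, Tm.eval, ih2]
      simp [Tm.subst, labT, ih, heval]


end Stmt
end

section
/- Let R be a TRS over Σ, (A, λ, Σ_red) a sound C-labeling for R, and s, t ground terms with s outermost-rewriting to t at position p. Then for all proper prefixes q of the position 1·p, the symbol of the labeled term lab(top(s)) at position q is not in Σ_red. -/
namespace TRSStmt

variable {F : Type} {ar : F → ℕ} {V A : Type} {L : F → Type}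

/-- Soundness of a C-labeling `(A, λ, Σ_red)` (with top symbol `tp`):
    a ground `tp`-free term whose labeled root is a redex symbol is a redex. -/
def SoundLab (I : (f : F) → (Fin (ar f) → A) → A)
    (lf : ∀ f : F, (Fin (ar f) → A) → L f) (tp : F)
    (R : Set (Rule F ar V)) (Sred : Set (LSym F L)) : Prop :=
  ∀ t : Tm F ar Empty, tpFree tp t →
    ∀ g ∈ Sred, (glab I lf t).rootSym = some g → IsRedex R t

/-- Completeness of a C-labeling: every ground `tp`-free redex has its
    labeled root in `Σ_red`. -/
def CompleteLab (I : (f : F) → (Fin (ar f) → A) → A)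
    (lf : ∀ f : F, (Fin (ar f) → A) → L f) (tp : F)
    (R : Set (Rule F ar V)) (Sred : Set (LSym F L)) : Prop :=
  ∀ t : Tm F ar Empty, tpFree tp t → IsRedex R t →
    ∃ g ∈ Sred, (glab I lf t).rootSym = some g

/-- A core algebra (relative to the `tp`-free signature `Σ`):
    every element is the interpretation of a ground term over `Σ`. -/
def CoreAlg (I : (f : F) → (Fin (ar f) → A) → A) (tp : F) : Prop :=
  ∀ a : A, ∃ t : Tm F ar Empty, tpFree tp t ∧ geval I t = a

/-- Prepending the flat context `f(x₁,…,□ at i,…,xₙ)` to a term. -/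
def flatExt (f : F) (i : Fin (ar f)) (xs : ∀ j : Fin (ar f), j ≠ i → V)
    (t : Tm F ar V) : Tm F ar V :=
  Tm.app f (fun j => if h : j = i then t else Tm.var (xs j h))

/-- The iterated flat-context extension of rule–assignment pairs
    underlying the dynamic context extension `CE(A,λ,R)`. -/
inductive Reach (I : (f : F) → (Fin (ar f) → A) → A)
    (lf : ∀ f : F, (Fin (ar f) → A) → L f)
    (R : Set (Rule F ar V)) (Sred : Set (LSym F L)) :
    Tm F ar V → Tm F ar V → (V → A) → Prop
  | base (l r : Tm F ar V) (α : V → A) : (l, r) ∈ R → Reach I lf R Sred l r α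
  | step (l r : Tm F ar V) (α : V → A) (f : F) (i : Fin (ar f))
      (xs : ∀ j : Fin (ar f), j ≠ i → V) (α' : V → A) :
      Reach I lf R Sred l r α →
      (l.eval I α ≠ r.eval I α ∨ ∃ x, r = Tm.var x) →
      (∀ j h, ¬ l.occurs (xs j h)) →
      (∀ j h j' h', xs j h = xs j' h' → j = j') →
      (∀ x : V, l.occurs x → α' x = α x) →
      (∀ g ∈ Sred, (labT I lf α' (flatExt f i xs l)).rootSym ≠ some g) →
      Reach I lf R Sred (flatExt f i xs l) (flatExt f i xs r) α'

/-- The rules of the dynamic context extension `CE(A,λ,R)`: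
    labelings of the fully extended rule–assignment pairs. -/
def CE (I : (f : F) → (Fin (ar f) → A) → A)
    (lf : ∀ f : F, (Fin (ar f) → A) → L f)
    (R : Set (Rule F ar V)) (Sred : Set (LSym F L)) :
    Set (Rule (LSym F L) (lar ar) V) :=
  { p | ∃ (l r : Tm F ar V) (α : V → A),
      Reach I lf R Sred l r α ∧ l.eval I α = r.eval I α ∧ (∀ x : V, r ≠ Tm.var x) ∧
      p = (labT I lf α l, labT I lf α r) }

/-- The replacement map of the transformed system:
    all arguments of redex symbols are frozen. -/
def ceMu (Sred : Set (LSym F L)) : (g : LSym F L) → Fin (lar ar g) → Prop :=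
  fun g _ => g ∉ Sred

/-- Outermost ground termination of `R` over the `tp`-free signature `Σ`. -/
def OGTtp (R : Set (Rule F ar V)) (tp : F) : Prop :=
  ¬ ∃ g : ℕ → Tm F ar Empty,
      (∀ n, tpFree tp (g n)) ∧ ∀ n, OStep R (g n) (g (n + 1))

end TRSStmt


namespace Stmt

open TRSStmt

theorem subAt_labT {F : Type} {ar : F → ℕ} {V A : Type} {L : F → Type}
    (I : (f : F) → (Fin (ar f) → A) → A)
    (lf : ∀ f : F, (Fin (ar f) → A) → L f) (α : V → A) :
    ∀ (t : Tm F ar V) (q : List ℕ),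
      (labT I lf α t).subAt q = (t.subAt q).map (labT I lf α)
  | t, [] => by simp [Tm.subAt]
  | .var _, _ :: _ => by simp [Tm.subAt, labT]
  | .app f ts, i :: q => by
      simp only [labT, Tm.subAt]
      by_cases h : i < ar f
      · rw [dif_pos h, dif_pos h]
        exact subAt_labT I lf α (ts ⟨i, h⟩) q
      · rw [dif_neg h, dif_neg h]; rfl

theorem tpFree_subAt {F : Type} {ar : F → ℕ} {V : Type} {tp : F} :
    ∀ (t : Tm F ar V), tpFree tp t → ∀ (q : List ℕ) (u : Tm F ar V),
      t.subAt q = some u → tpFree tp u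
  | t, h, [], u, hu => by simp [Tm.subAt] at hu; rwa [← hu]
  | .var _, _, _ :: _, u, hu => by simp [Tm.subAt] at hu
  | .app f ts, h, i :: q, u, hu => by
      simp only [Tm.subAt] at hu
      by_cases hi : i < ar f
      · rw [dif_pos hi] at hu
        exact tpFree_subAt (ts ⟨i, hi⟩) (h.2 _) q u hu
      · rw [dif_neg hi] at hu; exact absurd hu (by simp)

end Stmt

namespace Stmt

open TRSStmt

/-- Lemma 5.6: for an outermost step `s →_{R,p} t` on ground terms and a
    sound C-labeling, no symbol of `lab(top(s))` strictly above the position `0·p`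
    (the copy of `p` inside `top(s)`) is a redex symbol. -/
theorem no_redex_symbol_above {F : Type} {ar : F → ℕ} {V A : Type} {L : F → Type}
    (I : (f : F) → (Fin (ar f) → A) → A)
    (lf : ∀ f : F, (Fin (ar f) → A) → L f)
    (tp : F) (htp : ar tp = 1)
    (htpconst : ∀ as as' : Fin (ar tp) → A, I tp as = I tp as')
    (R : Set (Rule F ar V)) (hTRS : IsTRS R) (hfin : R.Finite)
    (hRtp : ∀ lr ∈ R, tpFree tp lr.1 ∧ tpFree tp lr.2)
    (hcmodel : IsCModel I R)
    (Sred : Set (LSym F L)) (hSred : ∀ g ∈ Sred, g.1 ≠ tp)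
    (hsound : SoundLab I lf tp R Sred)
    (s t : Tm F ar Empty) (hs : tpFree tp s) (ht : tpFree tp t)
    (p : List ℕ) (hstep : OutAt R p s t) :
    ∀ q : List ℕ, q <+: (0 :: p) → q ≠ 0 :: p →
      ∀ g ∈ Sred, (glab I lf (topT tp s)).symAt q ≠ some g := by
  intro q hpre hne g hg hsym
  match q, hpre with
  | [], _ =>
      have : g.1 = tp := by
        simp only [Tm.symAt, Tm.subAt, glab, topT, labT, Option.bind, Tm.rootSym] at hsym
        injection hsym with h1
        exact congrArg Sigma.fst h1.symm
      exact hSred g hg this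
  | i :: q', hpre =>
      obtain ⟨r, hr⟩ := hpre
      have hi : i = 0 := by
        have := congrArg (fun l => l.head?) hr
        simpa using this
      subst hi
      have hq' : q' <+: p := ⟨r, by simpa using hr⟩
      have hq'ne : q' ≠ p := fun h => hne (by rw [h])
      have h1 : (glab I lf (topT tp s)).subAt (0 :: q') = (glab I lf s).subAt q' := by
        simp only [glab, topT, labT, Tm.subAt]
        rw [dif_pos (show (0:ℕ) < ar tp by omega)]
      rw [Tm.symAt, h1] at hsym
      unfold glab at hsym
      rw [subAt_labT] at hsym
      cases hsub : s.subAt q' with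
      | none => rw [hsub] at hsym; simp [Option.bind] at hsym
      | some u =>
          rw [hsub] at hsym
          simp only [Option.map_some, Option.bind_some] at hsym
          have hu : tpFree tp u := tpFree_subAt s hs q' u hsub
          have hred : IsRedex R u := hsound u hu g hg hsym
          exact hstep.2 q' hq' hq'ne u hsub hred

end Stmt
end

section
/- Let (R, μ) be a terminating many-sorted context-sensitive TRS. If the context-sensitive TRS obtained from (R, μ) by dropping sorts admits an infinite rewrite sequence, then (R, μ) is both collapsing and duplicating. -/
namespace Stmt

open TRSStmt

/-- Well-sortedness of terms over a many-sorted signature (output sorts `outS`,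
    input sorts `inS`, variable sorts `sv`). -/
inductive WS {F : Type} {ar : F → ℕ} {V S : Type}
    (outS : F → S) (inS : ∀ f : F, Fin (ar f) → S) (sv : V → S) :
    Tm F ar V → S → Prop
  | var (x : V) : WS outS inS sv (Tm.var x) (sv x)
  | app (f : F) (ts : Fin (ar f) → Tm F ar V) :
      (∀ i, WS outS inS sv (ts i) (inS f i)) →
      WS outS inS sv (Tm.app f ts) (outS f)
section Dev

open Classical

variable {F : Type} {ar : F → ℕ} {V S : Type}

/-- A symbol is good if all its input sorts are inhabited by well-sorted terms. -/
def goodS (outS : F → S) (inS : ∀ f : F, Fin (ar f) → S) (sv : V → S) (f : F) : Prop :=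
  ∀ i : Fin (ar f), ∃ u : Tm F ar V, WS outS inS sv u (inS f i)

/-- A canonical well-sorted term of a given sort (junk if the sort is uninhabited). -/
noncomputable def dlt (outS : F → S) (inS : ∀ f : F, Fin (ar f) → S) (sv : V → S)
    [Nonempty (Tm F ar V)] (s : S) : Tm F ar V :=
  if h : ∃ u : Tm F ar V, WS outS inS sv u s then h.choose else Classical.arbitrary _

lemma dlt_WS (outS : F → S) (inS : ∀ f : F, Fin (ar f) → S) (sv : V → S)
    [Nonempty (Tm F ar V)] {s : S} (h : ∃ u : Tm F ar V, WS outS inS sv u s) :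
    WS outS inS sv (dlt outS inS sv s) s := by
  unfold dlt; rw [dif_pos h]; exact h.choose_spec

/-- The root of `t` is compatible with expected sort `s`. -/
def rootAl (outS : F → S) (inS : ∀ f : F, Fin (ar f) → S) (sv : V → S) (s : S) :
    Tm F ar V → Prop
  | .var y => sv y = s
  | .app g _ => goodS outS inS sv g ∧ outS g = s

/-- Position `i` below `f` with argument `c` is a cut (alien) position. -/
def cutC (outS : F → S) (inS : ∀ f : F, Fin (ar f) → S) (sv : V → S)
    (f : F) (i : Fin (ar f)) (c : Tm F ar V) : Prop :=
  ¬ goodS outS inS sv f ∨ ¬ rootAl outS inS sv (inS f i) c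

variable (outS : F → S) (inS : ∀ f : F, Fin (ar f) → S) (sv : V → S)

/-- The cap (topmost well-sorted layer) of a term. -/
noncomputable def capT [Nonempty (Tm F ar V)] : Tm F ar V → Tm F ar V
  | .var x => .var x
  | .app f ts => .app f (fun i =>
      if cutC outS inS sv f i (ts i) then dlt outS inS sv (inS f i) else capT (ts i))

/-- The multiset of maximal aliens of a term. -/
noncomputable def aliens : Tm F ar V → Multiset (Tm F ar V)
  | .var _ => 0
  | .app f ts => Finset.univ.sum (fun i =>
      if cutC outS inS sv f i (ts i) then {ts i} else aliens (ts i))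

/-- The layer-nesting rank of a term. -/
noncomputable def rank : Tm F ar V → ℕ
  | .var _ => 0
  | .app f ts => Finset.univ.sup (fun i =>
      (if cutC outS inS sv f i (ts i) then 1 else 0) + rank (ts i))

/-- The multiset of variable occurrences of a term. -/
def varOccs : Tm F ar V → Multiset V
  | .var x => {x}
  | .app _ ts => Finset.univ.sum (fun i => varOccs (ts i))

/-- Cap of a term relative to an expected sort. -/
noncomputable def capAt [Nonempty (Tm F ar V)] (s : S) (w : Tm F ar V) : Tm F ar V :=
  if rootAl outS inS sv s w then capT outS inS sv w else dlt outS inS sv s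

/-- Aliens of a term relative to an expected sort. -/
noncomputable def alAt (s : S) (w : Tm F ar V) : Multiset (Tm F ar V) :=
  if rootAl outS inS sv s w then aliens outS inS sv w else {w}

/-- Rank of a term relative to an expected sort. -/
noncomputable def rkAt (s : S) (w : Tm F ar V) : ℕ :=
  if rootAl outS inS sv s w then rank outS inS sv w else rank outS inS sv w + 1

variable (R : Set (Rule F ar V)) (μ : (f : F) → Fin (ar f) → Prop)

/-- A context-sensitive rewrite step between well-sorted terms. -/
def CapStep (c c' : Tm F ar V) : Prop :=
  (∃ s, WS outS inS sv c s) ∧ (∃ s, WS outS inS sv c' s) ∧ MuStep R μ c c'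

/-- One-step decrease relation used for the multiset (Dershowitz-Manna style) order. -/
def Osucc (x y : Tm F ar V) : Prop :=
  MuStep R μ x y ∨ (∃ z, MuStep R μ x z ∧ y ∈ aliens outS inS sv z) ∨ y ∈ aliens outS inS sv x

end Dev
section Dev2

set_option linter.unusedSectionVars false

open Classical

variable {F : Type} {ar : F → ℕ} {V S : Type}
variable {outS : F → S} {inS : ∀ f : F, Fin (ar f) → S} {sv : V → S}

lemma WS_var_inv {x : V} {s : S} (h : WS outS inS sv (Tm.var x) s) : s = sv x := by
  cases h; rfl

lemma WS_app_inv {f : F} {ts : Fin (ar f) → Tm F ar V} {s : S}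
    (h : WS outS inS sv (Tm.app f ts) s) :
    s = outS f ∧ ∀ i, WS outS inS sv (ts i) (inS f i) := by
  cases h; exact ⟨rfl, by assumption⟩

lemma goodS_of_WS {f : F} {ts : Fin (ar f) → Tm F ar V} {s : S}
    (h : WS outS inS sv (Tm.app f ts) s) : goodS outS inS sv f := by
  obtain ⟨-, h2⟩ := WS_app_inv h
  exact fun i => ⟨ts i, h2 i⟩

lemma rootAl_of_WS {t : Tm F ar V} {s : S} (h : WS outS inS sv t s) :
    rootAl outS inS sv s t := by
  cases t with
  | var x => simpa [rootAl] using (WS_var_inv h).symm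
  | app f ts =>
    obtain ⟨hs, -⟩ := WS_app_inv h
    exact ⟨goodS_of_WS h, hs.symm⟩

lemma inhab_sv (x : V) : ∃ u : Tm F ar V, WS outS inS sv u (sv x) := ⟨Tm.var x, WS.var x⟩

variable [Nonempty (Tm F ar V)]

lemma capT_WS : ∀ {w : Tm F ar V} {s : S}, rootAl outS inS sv s w →
    WS outS inS sv (capT outS inS sv w) s
  | Tm.var x, s, h => by
    have : sv x = s := h
    rw [capT, ← this]; exact WS.var x
  | Tm.app f ts, s, h => by
    obtain ⟨hg, ho⟩ := h
    rw [capT, ← ho]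
    refine WS.app f _ (fun i => ?_)
    by_cases hc : cutC outS inS sv f i (ts i)
    · rw [if_pos hc]; exact dlt_WS outS inS sv (hg i)
    · rw [if_neg hc]
      have hal : rootAl outS inS sv (inS f i) (ts i) := by
        by_contra hno; exact hc (Or.inr hno)
      exact capT_WS hal

lemma capAt_WS {s : S} (hs : ∃ u : Tm F ar V, WS outS inS sv u s) (w : Tm F ar V) :
    WS outS inS sv (capAt outS inS sv s w) s := by
  unfold capAt; split
  · exact capT_WS ‹_›
  · exact dlt_WS outS inS sv hs

lemma subst_WS {ρ : V → Tm F ar V} (hρ : ∀ x, WS outS inS sv (ρ x) (sv x)) :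
    ∀ {t : Tm F ar V} {s : S}, WS outS inS sv t s → WS outS inS sv (t.subst ρ) s := by
  intro t s h
  induction h with
  | var x => exact hρ x
  | app f ts hts ih => exact WS.app f _ (fun i => ih i)

/-- The capped substitution associated to `σ`. -/
noncomputable def csub (outS : F → S) (inS : ∀ f : F, Fin (ar f) → S) (sv : V → S)
    (σ : V → Tm F ar V) : V → Tm F ar V :=
  fun x => capAt outS inS sv (sv x) (σ x)

lemma csub_WS (σ : V → Tm F ar V) : ∀ x, WS outS inS sv (csub outS inS sv σ x) (sv x) :=
  fun x => capAt_WS (inhab_sv x) (σ x)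

lemma sum_bind {ι β γ : Type*} (s : Finset ι) (g : ι → Multiset β) (h : β → Multiset γ) :
    (s.sum g).bind h = s.sum (fun i => (g i).bind h) := by
  induction s using Finset.cons_induction with
  | empty => simp
  | cons a s ha ih => rw [Finset.sum_cons, Finset.sum_cons, Multiset.add_bind, ih]

lemma capAt_subst {σ : V → Tm F ar V} :
    ∀ {t : Tm F ar V} {s : S}, WS outS inS sv t s →
      capAt outS inS sv s (t.subst σ) = t.subst (csub outS inS sv σ) := by
  intro t s h
  induction h with
  | var x => rfl
  | app f ts hts ih =>
    have hg : goodS outS inS sv f := fun i => ⟨ts i, hts i⟩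
    have hra : rootAl outS inS sv (outS f) ((Tm.app f ts).subst σ) := by
      rw [Tm.subst]; exact ⟨hg, rfl⟩
    rw [capAt, if_pos hra, Tm.subst, Tm.subst, capT]
    congr 1
    funext i
    by_cases hc : cutC outS inS sv f i ((ts i).subst σ)
    · rw [if_pos hc, ← ih i, capAt, if_neg ?_]
      rcases hc with hc | hc
      · exact absurd hg hc
      · exact hc
    · rw [if_neg hc, ← ih i, capAt, if_pos ?_]
      by_contra hno; exact hc (Or.inr hno)

lemma alAt_subst {σ : V → Tm F ar V} :
    ∀ {t : Tm F ar V} {s : S}, WS outS inS sv t s →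
      alAt outS inS sv s (t.subst σ)
        = (varOccs t).bind (fun x => alAt outS inS sv (sv x) (σ x)) := by
  intro t s h
  induction h with
  | var x => rw [varOccs, Multiset.singleton_bind]; rfl
  | app f ts hts ih =>
    have hg : goodS outS inS sv f := fun i => ⟨ts i, hts i⟩
    have hra : rootAl outS inS sv (outS f) ((Tm.app f ts).subst σ) := by
      rw [Tm.subst]; exact ⟨hg, rfl⟩
    rw [alAt, if_pos hra, Tm.subst, aliens, varOccs, sum_bind]
    refine Finset.sum_congr rfl (fun i _ => ?_)
    rw [← ih i]
    by_cases hc : cutC outS inS sv f i ((ts i).subst σ)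
    · rw [if_pos hc, alAt, if_neg ?_]
      rcases hc with hc | hc
      · exact absurd hg hc
      · exact hc
    · rw [if_neg hc, alAt, if_pos ?_]
      by_contra hno; exact hc (Or.inr hno)

lemma rank_le_rkAt {s : S} {w : Tm F ar V} : rank outS inS sv w ≤ rkAt outS inS sv s w := by
  unfold rkAt; split <;> omega

lemma rkAt_subst_low {σ : V → Tm F ar V} :
    ∀ {t : Tm F ar V} {s : S}, WS outS inS sv t s → ∀ {x : V}, x ∈ varOccs t →
      rkAt outS inS sv (sv x) (σ x) ≤ rkAt outS inS sv s (t.subst σ) := by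
  intro t s h
  induction h with
  | var x => intro y hy; rw [varOccs, Multiset.mem_singleton] at hy; subst hy; exact le_refl _
  | app f ts hts ih =>
    intro x hx
    rw [varOccs, Multiset.mem_sum] at hx
    obtain ⟨i, -, hxi⟩ := hx
    refine le_trans (ih i hxi) ?_
    have hg : goodS outS inS sv f := fun i => ⟨ts i, hts i⟩
    have hra : rootAl outS inS sv (outS f) ((Tm.app f ts).subst σ) := by
      rw [Tm.subst]; exact ⟨hg, rfl⟩
    have hrw : rkAt outS inS sv (outS f) ((Tm.app f ts).subst σ)
        = Finset.univ.sup (fun i => (if cutC outS inS sv f i ((ts i).subst σ) then 1 else 0)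
            + rank outS inS sv ((ts i).subst σ)) := by
      rw [rkAt, if_pos hra]; rw [Tm.subst, rank]
    rw [hrw]
    have hle : rkAt outS inS sv (inS f i) ((ts i).subst σ)
        ≤ (if cutC outS inS sv f i ((ts i).subst σ) then 1 else 0)
            + rank outS inS sv ((ts i).subst σ) := by
      rw [rkAt]
      by_cases hc : cutC outS inS sv f i ((ts i).subst σ)
      · rw [if_pos hc]
        split <;> omega
      · have hal : rootAl outS inS sv (inS f i) ((ts i).subst σ) := by
          by_contra hno; exact hc (Or.inr hno)
        rw [if_pos hal, if_neg hc]; omega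
    exact le_trans hle (Finset.le_sup
      (f := fun j => (if cutC outS inS sv f j ((ts j).subst σ) then 1 else 0)
        + rank outS inS sv ((ts j).subst σ)) (Finset.mem_univ i))

lemma rkAt_subst_up {σ : V → Tm F ar V} {B : ℕ} :
    ∀ {t : Tm F ar V} {s : S}, WS outS inS sv t s →
      (∀ x ∈ varOccs t, rkAt outS inS sv (sv x) (σ x) ≤ B) →
      rkAt outS inS sv s (t.subst σ) ≤ B := by
  intro t s h
  induction h with
  | var x => intro hB; exact hB x (by rw [varOccs]; exact Multiset.mem_singleton_self x)
  | app f ts hts ih =>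
    intro hB
    have hg : goodS outS inS sv f := fun i => ⟨ts i, hts i⟩
    have hra : rootAl outS inS sv (outS f) ((Tm.app f ts).subst σ) := by
      rw [Tm.subst]; exact ⟨hg, rfl⟩
    have hrw : rkAt outS inS sv (outS f) ((Tm.app f ts).subst σ)
        = Finset.univ.sup (fun i => (if cutC outS inS sv f i ((ts i).subst σ) then 1 else 0)
            + rank outS inS sv ((ts i).subst σ)) := by
      rw [rkAt, if_pos hra]; rw [Tm.subst, rank]
    rw [hrw]
    refine Finset.sup_le (fun i _ => ?_)
    have hi : rkAt outS inS sv (inS f i) ((ts i).subst σ) ≤ B := by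
      refine ih i (fun x hx => hB x ?_)
      rw [varOccs, Multiset.mem_sum]; exact ⟨i, Finset.mem_univ i, hx⟩
    rw [rkAt] at hi
    by_cases hc : cutC outS inS sv f i ((ts i).subst σ)
    · have hal : ¬ rootAl outS inS sv (inS f i) ((ts i).subst σ) := by
        rcases hc with hc | hc
        · exact absurd hg hc
        · exact hc
      rw [if_neg hal] at hi; rw [if_pos hc]; omega
    · have hal : rootAl outS inS sv (inS f i) ((ts i).subst σ) := by
        by_contra hno; exact hc (Or.inr hno)
      rw [if_pos hal] at hi; rw [if_neg hc]; omega

lemma mem_aliens_rank_lt : ∀ {t y : Tm F ar V}, y ∈ aliens outS inS sv t →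
    rank outS inS sv y < rank outS inS sv t
  | Tm.var _, y, h => by rw [aliens] at h; exact absurd h (Multiset.notMem_zero y)
  | Tm.app f ts, y, h => by
    rw [aliens, Multiset.mem_sum] at h
    obtain ⟨i, -, hi⟩ := h
    rw [rank]
    by_cases hc : cutC outS inS sv f i (ts i)
    · rw [if_pos hc] at hi
      rw [Multiset.mem_singleton] at hi; subst hi
      calc rank outS inS sv (ts i) < 1 + rank outS inS sv (ts i) := by omega
        _ ≤ _ := by
          refine le_trans (le_of_eq ?_) (Finset.le_sup (Finset.mem_univ i))
          rw [if_pos hc]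
    · rw [if_neg hc] at hi
      have := mem_aliens_rank_lt hi
      calc rank outS inS sv y < rank outS inS sv (ts i) := this
        _ ≤ _ := by
          refine le_trans ?_ (Finset.le_sup (Finset.mem_univ i))
          rw [if_neg hc]; omega

lemma mem_varOccs_occurs : ∀ {t : Tm F ar V} {x : V}, x ∈ varOccs t ↔ t.occurs x
  | Tm.var y, x => by
    rw [varOccs, Multiset.mem_singleton]
    constructor
    · intro h; subst h; rfl
    · intro h; exact (h : y = x).symm
  | Tm.app f ts, x => by
    rw [varOccs, Multiset.mem_sum]
    constructor
    · rintro ⟨i, -, hi⟩; exact ⟨i, mem_varOccs_occurs.1 hi⟩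
    · rintro ⟨i, hi⟩; exact ⟨i, Finset.mem_univ i, mem_varOccs_occurs.2 hi⟩

lemma countV_eq_count [DecidableEq V] : ∀ {t : Tm F ar V} {x : V},
    countV x t = (varOccs t).count x
  | Tm.var y, x => by
    rw [countV, varOccs]
    by_cases h : y = x
    · subst h; rw [if_pos rfl, Multiset.count_singleton_self]
    · rw [if_neg h, Multiset.count_singleton, if_neg (Ne.symm h)]
  | Tm.app f ts, x => by
    rw [countV, varOccs, Multiset.count_sum']
    exact Finset.sum_congr rfl (fun i _ => countV_eq_count)

end Dev2
section Dev3

set_option linter.unusedSectionVars false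

open Classical

variable {F : Type} {ar : F → ℕ} {V S : Type}
variable {outS : F → S} {inS : ∀ f : F, Fin (ar f) → S} {sv : V → S}
variable {R : Set (Rule F ar V)} {μ : (f : F) → Fin (ar f) → Prop}
variable [Nonempty (Tm F ar V)]

lemma MuPos_cons_inv {f : F} {ts : Fin (ar f) → Tm F ar V} {i : ℕ} {q : List ℕ}
    (h : MuPos μ (Tm.app f ts) (i :: q)) :
    ∃ j : Fin (ar f), j.val = i ∧ μ f j ∧ MuPos μ (ts j) q := by
  cases h with
  | cons f ts j p hμ hp => exact ⟨j, rfl, hμ, hp⟩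

lemma RewAt_nil_inv {t u : Tm F ar V} (h : RewAt R [] t u) :
    ∃ l r σ, (l, r) ∈ R ∧ t = l.subst σ ∧ u = r.subst σ := by
  obtain ⟨lr, hlr, σ, h1, h2⟩ := h
  rw [Tm.subAt] at h1
  rw [Tm.replaceAt] at h2
  exact ⟨lr.1, lr.2, σ, hlr, (Option.some_injective _ h1), (Option.some_injective _ h2).symm⟩

lemma RewAt_cons_inv {t u : Tm F ar V} {i : ℕ} {q : List ℕ} (h : RewAt R (i :: q) t u) :
    ∃ (f : F) (ts : Fin (ar f) → Tm F ar V) (hi : i < ar f) (w : Tm F ar V),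
      t = Tm.app f ts ∧ RewAt R q (ts ⟨i, hi⟩) w ∧
      u = Tm.app f (Function.update ts ⟨i, hi⟩ w) := by
  obtain ⟨lr, hlr, σ, h1, h2⟩ := h
  cases t with
  | var x => rw [Tm.subAt] at h1; cases h1
  | app f ts =>
    rw [Tm.subAt] at h1
    rw [Tm.replaceAt] at h2
    by_cases hi : i < ar f
    · rw [dif_pos hi] at h1 h2
      obtain ⟨w, hw1, hw2⟩ := Option.map_eq_some_iff.1 h2
      exact ⟨f, ts, hi, w, rfl, ⟨lr, hlr, σ, h1, hw1⟩, hw2.symm⟩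
    · rw [dif_neg hi] at h1; cases h1

lemma RewAt_lift {f : F} {ts : Fin (ar f) → Tm F ar V} (j : Fin (ar f)) {q : List ℕ}
    {w : Tm F ar V} (h : RewAt R q (ts j) w) :
    RewAt R (j.val :: q) (Tm.app f ts) (Tm.app f (Function.update ts j w)) := by
  obtain ⟨lr, hlr, σ, h1, h2⟩ := h
  refine ⟨lr, hlr, σ, ?_, ?_⟩
  · rw [Tm.subAt, dif_pos j.isLt, Fin.eta]; exact h1
  · rw [Tm.replaceAt, dif_pos j.isLt, Fin.eta, h2, Option.map_some]

lemma MuStep_lift {f : F} {ts : Fin (ar f) → Tm F ar V} (j : Fin (ar f)) {w : Tm F ar V}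
    (hμ : μ f j) (h : MuStep R μ (ts j) w) :
    MuStep R μ (Tm.app f ts) (Tm.app f (Function.update ts j w)) := by
  obtain ⟨p, hrw, hmp⟩ := h
  exact ⟨j.val :: p, RewAt_lift j hrw, MuPos.cons f ts j p hμ hmp⟩

lemma MuStep_root {l r : Tm F ar V} (hlr : (l, r) ∈ R) (σ : V → Tm F ar V) :
    MuStep R μ (l.subst σ) (r.subst σ) :=
  ⟨[], ⟨(l, r), hlr, σ, by rw [Tm.subAt], by rw [Tm.replaceAt]⟩, MuPos.nil _⟩

lemma rule_lhs_app (hTRS : IsTRS R) {l r : Tm F ar V} (hlr : (l, r) ∈ R) :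
    ∃ (f : F) (ls : Fin (ar f) → Tm F ar V), l = Tm.app f ls := by
  cases hl : l with
  | var x => exact absurd hl ((hTRS _ hlr).1 x)
  | app f ls => exact ⟨f, ls, rfl⟩

lemma rule_sorts (hWSrules : ∀ lr ∈ R, ∃ s : S, WS outS inS sv lr.1 s ∧ WS outS inS sv lr.2 s)
    {l r : Tm F ar V} (hlr : (l, r) ∈ R) :
    ∃ s₀, WS outS inS sv l s₀ ∧ WS outS inS sv r s₀ := hWSrules _ hlr

/-- Status of the root under a rewrite step: either root compatibility is unchanged,
or it is a root collapse step. -/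
lemma step_status (hTRS : IsTRS R)
    (hWSrules : ∀ lr ∈ R, ∃ s : S, WS outS inS sv lr.1 s ∧ WS outS inS sv lr.2 s)
    {q : List ℕ} {v v' : Tm F ar V} (h : RewAt R q v v') :
    (∀ s, rootAl outS inS sv s v ↔ rootAl outS inS sv s v') ∨
    (q = [] ∧ ∃ l x σ, (l, Tm.var x) ∈ R ∧ v = l.subst σ ∧ v' = σ x) := by
  cases q with
  | nil =>
    obtain ⟨l, r, σ, hlr, hv, hv'⟩ := RewAt_nil_inv h
    cases r with
    | var x => exact Or.inr ⟨rfl, l, x, σ, hlr, hv, hv'⟩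
    | app f₁ rs =>
      left
      obtain ⟨s₀, hl, hr⟩ := rule_sorts hWSrules hlr
      obtain ⟨f₀, ls, hlapp⟩ := rule_lhs_app hTRS hlr
      subst hlapp
      obtain ⟨hs₀, hlc⟩ := WS_app_inv hl
      obtain ⟨hs₁, hrc⟩ := WS_app_inv hr
      have hg₀ : goodS outS inS sv f₀ := goodS_of_WS hl
      have hg₁ : goodS outS inS sv f₁ := goodS_of_WS hr
      intro s
      rw [hv, hv', Tm.subst, Tm.subst]
      constructor
      · rintro ⟨-, ho⟩; exact ⟨hg₁, by rw [← hs₁, hs₀, ho]⟩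
      · rintro ⟨-, ho⟩; exact ⟨hg₀, by rw [← hs₀, hs₁, ho]⟩
  | cons i q' =>
    obtain ⟨f, ts, hi, w, hv, -, hv'⟩ := RewAt_cons_inv h
    left
    intro s
    rw [hv, hv']
    exact Iff.rfl

lemma occurs_rule (hTRS : IsTRS R) {l r : Tm F ar V} (hlr : (l, r) ∈ R) {x : V}
    (hx : r.occurs x) : x ∈ varOccs l :=
  mem_varOccs_occurs.2 ((hTRS _ hlr).2 x hx)

lemma rank_app_le {f : F} {ts ts' : Fin (ar f) → Tm F ar V}
    (h : ∀ i, (if cutC outS inS sv f i (ts' i) then 1 else 0) + rank outS inS sv (ts' i)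
        ≤ (if cutC outS inS sv f i (ts i) then 1 else 0) + rank outS inS sv (ts i)) :
    rank outS inS sv (Tm.app f ts') ≤ rank outS inS sv (Tm.app f ts) := by
  rw [rank, rank]
  refine Finset.sup_le (fun i _ => le_trans (h i) ?_)
  exact Finset.le_sup (f := fun j => (if cutC outS inS sv f j (ts j) then 1 else 0)
    + rank outS inS sv (ts j)) (Finset.mem_univ i)

lemma not_cutC {f : F} {i : Fin (ar f)} {c : Tm F ar V}
    (h : ¬ cutC outS inS sv f i c) :
    goodS outS inS sv f ∧ rootAl outS inS sv (inS f i) c := by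
  simpa [cutC, not_or, not_not] using h

lemma rootAl_subst_app {f : F} {ls : Fin (ar f) → Tm F ar V} {s : S} {σ : V → Tm F ar V}
    (h : WS outS inS sv (Tm.app f ls) s) :
    rootAl outS inS sv s ((Tm.app f ls).subst σ) := by
  rw [Tm.subst]; exact ⟨goodS_of_WS h, ((WS_app_inv h).1).symm⟩

lemma rank_step (hTRS : IsTRS R)
    (hWSrules : ∀ lr ∈ R, ∃ s : S, WS outS inS sv lr.1 s ∧ WS outS inS sv lr.2 s) :
    ∀ {q : List ℕ} {v v' : Tm F ar V}, RewAt R q v v' →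
      rank outS inS sv v' ≤ rank outS inS sv v := by
  intro q
  induction q with
  | nil =>
    intro v v' h
    obtain ⟨l, r, σ, hlr, hv, hv'⟩ := RewAt_nil_inv h
    obtain ⟨s₀, hl, hr⟩ := rule_sorts hWSrules hlr
    have hkey : rkAt outS inS sv s₀ (l.subst σ) = rank outS inS sv (l.subst σ) := by
      obtain ⟨f₀, ls, hlapp⟩ := rule_lhs_app hTRS hlr
      subst hlapp
      rw [rkAt, if_pos (rootAl_subst_app hl)]
    subst hv hv'
    refine le_trans rank_le_rkAt (rkAt_subst_up hr (fun x hx => ?_))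
    rw [← hkey]
    exact rkAt_subst_low hl (occurs_rule hTRS hlr (mem_varOccs_occurs.1 hx))
  | cons i q' ih =>
    intro v v' h
    obtain ⟨f, ts, hi, w, hv, hq, hv'⟩ := RewAt_cons_inv h
    subst hv hv'
    set j : Fin (ar f) := ⟨i, hi⟩ with hj
    refine rank_app_le (fun m => ?_)
    by_cases hm : m = j
    · rw [hm, Function.update_self]
      have hrk : rank outS inS sv w ≤ rank outS inS sv (ts j) := ih hq
      by_cases hc : cutC outS inS sv f j (ts j)
      · rw [if_pos hc]; split <;> omega
      · obtain ⟨hgf, hal⟩ := not_cutC hc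
        by_cases hc' : cutC outS inS sv f j w
        · rcases step_status hTRS hWSrules hq with hst | ⟨-, l, x, σ, hlr, hveq, hweq⟩
          · exact absurd (Or.resolve_left hc' (not_not.2 hgf)) (not_not.2 ((hst _).1 hal))
          · obtain ⟨s₀, hlws, hrws⟩ := rule_sorts hWSrules hlr
            have hsx : s₀ = sv x := WS_var_inv hrws
            obtain ⟨f₀, ls, hlapp⟩ := rule_lhs_app hTRS hlr
            have hsort : inS f j = s₀ := by
              rw [hveq, hlapp, Tm.subst] at hal
              obtain ⟨-, ho⟩ := hal
              rw [← ho]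
              exact ((WS_app_inv (hlapp ▸ hlws)).1).symm
            have hnal : ¬ rootAl outS inS sv (sv x) (σ x) := by
              intro hcon
              exact (Or.resolve_left hc' (not_not.2 hgf)) (by rwa [← hsx, ← hsort, ← hweq] at hcon)
            have hlow := rkAt_subst_low (σ := σ) hlws (occurs_rule hTRS hlr rfl)
            rw [rkAt, if_neg hnal] at hlow
            have hkey : rkAt outS inS sv s₀ (l.subst σ) = rank outS inS sv (l.subst σ) := by
              rw [hlapp]
              rw [rkAt, if_pos (rootAl_subst_app (by rwa [hlapp] at hlws))]
            rw [hkey, ← hveq, ← hweq] at hlow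
            rw [if_pos hc', if_neg hc]
            omega
        · rw [if_neg hc, if_neg hc']; omega
    · rw [Function.update_of_ne hm]

end Dev3
section Dev4

set_option linter.unusedSectionVars false
set_option maxHeartbeats 1000000

open Classical

variable {F : Type} {ar : F → ℕ} {V S : Type} [DecidableEq V]
variable {outS : F → S} {inS : ∀ f : F, Fin (ar f) → S} {sv : V → S}
variable {R : Set (Rule F ar V)} {μ : (f : F) → Fin (ar f) → Prop}
variable [Nonempty (Tm F ar V)]

lemma aliens_app_split (f : F) (ts : Fin (ar f) → Tm F ar V) (j : Fin (ar f)) :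
    aliens outS inS sv (Tm.app f ts)
      = (if cutC outS inS sv f j (ts j) then {ts j} else aliens outS inS sv (ts j))
        + (Finset.univ.erase j).sum (fun m =>
            if cutC outS inS sv f m (ts m) then {ts m} else aliens outS inS sv (ts m)) := by
  rw [aliens]
  exact (Finset.add_sum_erase _ _ (Finset.mem_univ j)).symm

lemma erase_sum_update (f : F) (ts : Fin (ar f) → Tm F ar V) (j : Fin (ar f))
    (w : Tm F ar V) :
    (Finset.univ.erase j).sum (fun m =>
        if cutC outS inS sv f m (Function.update ts j w m) then {Function.update ts j w m}
        else aliens outS inS sv (Function.update ts j w m))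
      = (Finset.univ.erase j).sum (fun m =>
          if cutC outS inS sv f m (ts m) then {ts m} else aliens outS inS sv (ts m)) :=
  Finset.sum_congr rfl (fun m hm => by rw [Function.update_of_ne (Finset.ne_of_mem_erase hm)])

lemma aliens_update_split (f : F) (ts : Fin (ar f) → Tm F ar V) (j : Fin (ar f))
    (w : Tm F ar V) :
    aliens outS inS sv (Tm.app f (Function.update ts j w))
      = (if cutC outS inS sv f j w then {w} else aliens outS inS sv w)
        + (Finset.univ.erase j).sum (fun m =>
            if cutC outS inS sv f m (ts m) then {ts m} else aliens outS inS sv (ts m)) := by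
  rw [aliens_app_split f _ j, Function.update_self, erase_sum_update]

lemma capT_app (f : F) (ts : Fin (ar f) → Tm F ar V) :
    capT outS inS sv (Tm.app f ts)
      = Tm.app f (fun m =>
          if cutC outS inS sv f m (ts m) then dlt outS inS sv (inS f m)
          else capT outS inS sv (ts m)) := by
  rw [capT]

lemma capT_update (f : F) (ts : Fin (ar f) → Tm F ar V) (j : Fin (ar f)) (w : Tm F ar V) :
    capT outS inS sv (Tm.app f (Function.update ts j w))
      = Tm.app f (Function.update
          (fun m => if cutC outS inS sv f m (ts m) then dlt outS inS sv (inS f m)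
            else capT outS inS sv (ts m)) j
          (if cutC outS inS sv f j w then dlt outS inS sv (inS f j)
            else capT outS inS sv w)) := by
  rw [capT]
  congr 1
  funext m
  by_cases hm : m = j
  · subst hm; rw [Function.update_self, Function.update_self]
  · rw [Function.update_of_ne hm, Function.update_of_ne hm]

lemma varOccs_le {l r : Tm F ar V} (hnd : ∀ x, countV x r ≤ countV x l) :
    varOccs r ≤ varOccs l :=
  Multiset.le_iff_count.2 (fun x => by
    rw [← countV_eq_count, ← countV_eq_count]; exact hnd x)

/-- The main classification of a context-sensitive rewrite step. -/
lemma class_lemma (hTRS : IsTRS R)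
    (hWSrules : ∀ lr ∈ R, ∃ s : S, WS outS inS sv lr.1 s ∧ WS outS inS sv lr.2 s) :
    ∀ {p : List ℕ} {t u : Tm F ar V}, RewAt R p t u → MuPos μ t p →
    (CapStep outS inS sv R μ (capT outS inS sv t) (capT outS inS sv u) ∧
      ((∀ lr ∈ R, ∀ x : V, countV x lr.2 ≤ countV x lr.1) →
        aliens outS inS sv u ≤ aliens outS inS sv t)) ∨
    (capT outS inS sv t = capT outS inS sv u ∧
      ∃ W a a', aliens outS inS sv t = a ::ₘ W ∧ aliens outS inS sv u = a' ::ₘ W ∧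
        MuStep R μ a a') ∨
    ((∃ l x, (l, Tm.var x) ∈ R) ∧
      ∃ W X Y x₀, aliens outS inS sv t = W + X ∧ aliens outS inS sv u = W + Y ∧
        x₀ ∈ X ∧ ∀ y ∈ Y, Osucc outS inS sv R μ x₀ y) := by
  intro p
  induction p with
  | nil =>
    intro t u h hp
    obtain ⟨l, r, σ, hlr, ht, hu⟩ := RewAt_nil_inv h
    obtain ⟨s₀, hl, hr⟩ := rule_sorts hWSrules hlr
    obtain ⟨f₀, ls, hlapp⟩ := rule_lhs_app hTRS hlr
    have hraT : rootAl outS inS sv s₀ (l.subst σ) := by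
      rw [hlapp]; exact rootAl_subst_app (hlapp ▸ hl)
    have hcapT : capT outS inS sv t = l.subst (csub outS inS sv σ) := by
      rw [ht, ← capAt_subst hl, capAt, if_pos hraT]
    have halT : aliens outS inS sv t
        = (varOccs l).bind (fun x => alAt outS inS sv (sv x) (σ x)) := by
      rw [ht, ← alAt_subst hl, alAt, if_pos hraT]
    have hWScapT : ∃ s, WS outS inS sv (capT outS inS sv t) s :=
      ⟨s₀, hcapT ▸ subst_WS (csub_WS σ) hl⟩
    cases r with
    | app f₁ rs =>
      left
      have hraU : rootAl outS inS sv s₀ ((Tm.app f₁ rs).subst σ) := rootAl_subst_app hr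
      have hcapU : capT outS inS sv u = (Tm.app f₁ rs).subst (csub outS inS sv σ) := by
        rw [hu, ← capAt_subst hr, capAt, if_pos hraU]
      have halU : aliens outS inS sv u
          = (varOccs (Tm.app f₁ rs)).bind (fun x => alAt outS inS sv (sv x) (σ x)) := by
        rw [hu, ← alAt_subst hr, alAt, if_pos hraU]
      constructor
      · refine ⟨hWScapT, ⟨s₀, hcapU ▸ subst_WS (csub_WS σ) hr⟩, ?_⟩
        rw [hcapT, hcapU]
        exact MuStep_root hlr _
      · intro hnd
        obtain ⟨D, hD⟩ := Multiset.le_iff_exists_add.1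
          (varOccs_le (fun x => hnd _ hlr x))
        rw [halT, halU, hD, Multiset.add_bind]
        exact le_add_right (le_refl _)
    | var x =>
      have hsx : s₀ = sv x := WS_var_inv hr
      have hxin : x ∈ varOccs l := occurs_rule hTRS hlr rfl
      have hsplit : varOccs l = x ::ₘ (varOccs l).erase x := (Multiset.cons_erase hxin).symm
      have halT' : aliens outS inS sv t
          = alAt outS inS sv (sv x) (σ x)
            + ((varOccs l).erase x).bind (fun y => alAt outS inS sv (sv y) (σ y)) := by
        rw [halT]
        conv_lhs => rw [hsplit]
        rw [Multiset.cons_bind]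
      have huσ : u = σ x := hu
      by_cases hra : rootAl outS inS sv (sv x) (σ x)
      · -- aligned collapse: the cap performs the collapse step
        left
        have halU : aliens outS inS sv u = alAt outS inS sv (sv x) (σ x) := by
          rw [huσ, alAt, if_pos hra]
        have hcapU : capT outS inS sv u = csub outS inS sv σ x := by
          rw [huσ, csub, capAt, if_pos hra]
        constructor
        · refine ⟨hWScapT, ⟨sv x, by rw [hcapU]; exact csub_WS σ x⟩, ?_⟩
          rw [hcapT, hcapU]
          exact MuStep_root hlr _
        · intro _
          rw [halU, halT']
          exact le_add_right (le_refl _)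
      · -- misaligned collapse: the alien σ x is dissolved into its own aliens
        right; right
        refine ⟨⟨l, x, hlr⟩, 0, aliens outS inS sv t, aliens outS inS sv u, σ x, ?_, ?_, ?_, ?_⟩
        · rw [zero_add]
        · rw [zero_add]
        · rw [halT', alAt, if_neg hra, Multiset.singleton_add]
          exact Multiset.mem_cons_self _ _
        · intro y hy
          rw [huσ] at hy
          exact Or.inr (Or.inr hy)
  | cons i q ih =>
    intro t u h hp
    obtain ⟨f, ts, hi, w, ht, hq, hu⟩ := RewAt_cons_inv h
    subst ht
    obtain ⟨j', hj', hμ, hmp⟩ := MuPos_cons_inv hp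
    have hjj : j' = (⟨i, hi⟩ : Fin (ar f)) := Fin.ext hj'
    subst hjj
    set j : Fin (ar f) := ⟨i, hi⟩ with hjdef
    have hstep : MuStep R μ (ts j) w := ⟨q, hq, hmp⟩
    set restT : Multiset (Tm F ar V) := (Finset.univ.erase j).sum (fun m =>
      if cutC outS inS sv f m (ts m) then {ts m} else aliens outS inS sv (ts m)) with hrest
    have halT := aliens_app_split (outS := outS) (inS := inS) (sv := sv) f ts j
    have halU := aliens_update_split (outS := outS) (inS := inS) (sv := sv) f ts j w
    rw [← hrest] at halT halU
    by_cases hc : cutC outS inS sv f j (ts j)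
    · by_cases hc' : cutC outS inS sv f j w
      · -- alien at j, stays an alien: single replacement
        right; left
        constructor
        · rw [hu, capT_app, capT_update]
          congr 1
          funext m
          by_cases hm : m = j
          · subst hm
            rw [Function.update_self, if_pos hc, if_pos hc']
          · rw [Function.update_of_ne hm]
        · refine ⟨restT, ts j, w, ?_, ?_, hstep⟩
          · rw [halT, if_pos hc, Multiset.singleton_add]
          · rw [hu, halU, if_pos hc', Multiset.singleton_add]
      · -- alien at j is merged into the top layer: root collapse
        obtain ⟨hgf, hralw⟩ := not_cutC hc'
        rcases step_status hTRS hWSrules hq with hst | ⟨hqnil, l, x, σ, hlr, hveq, hweq⟩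
        · exfalso
          rcases hc with hbad | hnal
          · exact hbad hgf
          · exact hnal ((hst _).2 hralw)
        · right; right
          refine ⟨⟨l, x, hlr⟩, restT, {ts j}, aliens outS inS sv w, ts j, ?_, ?_, ?_, ?_⟩
          · rw [halT, if_pos hc, add_comm]
          · rw [hu, halU, if_neg hc', add_comm]
          · exact Multiset.mem_singleton_self _
          · intro y hy
            refine Or.inr (Or.inl ⟨σ x, ?_, by rwa [← hweq]⟩)
            rw [hveq]
            exact MuStep_root hlr σ
    · obtain ⟨hgf, hral⟩ := not_cutC hc
      by_cases hc' : cutC outS inS sv f j w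
      · -- top-layer piece at j becomes an alien: root collapse, misaligned
        have hnral : ¬ rootAl outS inS sv (inS f j) w :=
          Or.resolve_left hc' (not_not.2 hgf)
        rcases step_status hTRS hWSrules hq with hst | ⟨hqnil, l, x, σ, hlr, hveq, hweq⟩
        · exact absurd ((hst _).1 hral) hnral
        · obtain ⟨s₀, hlws, hrws⟩ := rule_sorts hWSrules hlr
          have hsx : s₀ = sv x := WS_var_inv hrws
          obtain ⟨f₀, ls, hlapp⟩ := rule_lhs_app hTRS hlr
          have hsort : inS f j = s₀ := by
            rw [hveq, hlapp, Tm.subst] at hral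
            obtain ⟨-, ho⟩ := hral
            rw [← ho]
            exact ((WS_app_inv (hlapp ▸ hlws)).1).symm
          have hmisx : ¬ rootAl outS inS sv (sv x) (σ x) := by
            intro hcon
            exact hnral (by rwa [← hsx, ← hsort, ← hweq] at hcon)
          have hraTS : rootAl outS inS sv s₀ (l.subst σ) := by
            rw [hlapp]; exact rootAl_subst_app (hlapp ▸ hlws)
          have hxin : x ∈ varOccs l := occurs_rule hTRS hlr rfl
          have hsplitV : varOccs l = x ::ₘ (varOccs l).erase x := (Multiset.cons_erase hxin).symm
          have haltsj : aliens outS inS sv (ts j)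
              = {σ x} + ((varOccs l).erase x).bind (fun y => alAt outS inS sv (sv y) (σ y)) := by
            rw [hveq,
              show aliens outS inS sv (Tm.subst σ l) = alAt outS inS sv s₀ (Tm.subst σ l) by
                rw [alAt, if_pos hraTS],
              alAt_subst hlws]
            conv_lhs => rw [hsplitV]
            rw [Multiset.cons_bind]
            congr 1
            rw [alAt, if_neg hmisx]
          set Z : Multiset (Tm F ar V) :=
            ((varOccs l).erase x).bind (fun y => alAt outS inS sv (sv y) (σ y)) with hZdef
          have haT : aliens outS inS sv (Tm.app f ts) = ({σ x} + restT) + Z := by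
            rw [halT, if_neg hc, haltsj]
            rw [add_assoc, add_comm Z restT, ← add_assoc]
          have haU : aliens outS inS sv u = ({σ x} + restT) := by
            rw [hu, halU, if_pos hc', hweq]
          by_cases hZ : Z = 0
          · -- aliens unchanged; the cap does the collapse step at position j
            left
            constructor
            · have hcapTS : capT outS inS sv (ts j) = l.subst (csub outS inS sv σ) := by
                rw [hveq, ← capAt_subst hlws, capAt, if_pos hraTS]
              have hcT : capT outS inS sv (Tm.app f ts)
                  = Tm.app f (fun m => if cutC outS inS sv f m (ts m)
                      then dlt outS inS sv (inS f m) else capT outS inS sv (ts m)) :=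
                capT_app f ts
              have hcU : capT outS inS sv u
                  = Tm.app f (Function.update
                      (fun m => if cutC outS inS sv f m (ts m)
                        then dlt outS inS sv (inS f m) else capT outS inS sv (ts m)) j
                      (dlt outS inS sv (inS f j))) := by
                rw [hu, capT_update, if_pos hc']
              refine ⟨⟨outS f, capT_WS ⟨hgf, rfl⟩⟩,
                ⟨outS f, by rw [hu]; exact capT_WS ⟨hgf, rfl⟩⟩, ?_⟩
              · rw [hcT, hu, capT_update, if_pos hc']
                have hmu : MuStep R μ
                    ((fun m => if cutC outS inS sv f m (ts m)
                        then dlt outS inS sv (inS f m) else capT outS inS sv (ts m)) j)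
                    ((Tm.var x).subst (csub outS inS sv σ)) := by
                  show MuStep R μ (if cutC outS inS sv f j (ts j)
                    then dlt outS inS sv (inS f j) else capT outS inS sv (ts j)) _
                  rw [if_neg hc, hcapTS]
                  exact MuStep_root hlr _
                have := MuStep_lift (R := R) (μ := μ)
                  (ts := fun m => if cutC outS inS sv f m (ts m)
                    then dlt outS inS sv (inS f m) else capT outS inS sv (ts m)) j hμ hmu
                have hrw : (Tm.var x).subst (csub outS inS sv σ)
                    = dlt outS inS sv (inS f j) := by
                  rw [Tm.subst, csub, capAt, if_neg hmisx, hsort, hsx]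
                rwa [hrw] at this
            · intro _
              rw [haT, haU, hZ, add_zero]
          · right; right
            obtain ⟨z₀, hz₀⟩ := Multiset.exists_mem_of_ne_zero hZ
            refine ⟨⟨l, x, hlr⟩, {σ x} + restT, Z, 0, z₀, haT, by rw [haU, add_zero], hz₀, ?_⟩
            intro y hy
            exact absurd hy (Multiset.notMem_zero y)
      · -- interior position: lift the induction hypothesis
        obtain ⟨hgf', hralw⟩ := not_cutC hc'
        have hcT := capT_app (outS := outS) (inS := inS) (sv := sv) f ts
        have hcU := capT_update (outS := outS) (inS := inS) (sv := sv) f ts j w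
        rcases ih hq hmp with ⟨⟨hws1, hws2, hmu⟩, hnd⟩ | ⟨hcape, W₀, a, a', h1, h2, hstp⟩
          | ⟨hcol, W₀, X, Y, x₀, h1, h2, hx₀, hdom⟩
        · left
          constructor
          · refine ⟨⟨outS f, capT_WS ⟨hgf, rfl⟩⟩,
              ⟨outS f, by rw [hu]; exact capT_WS ⟨hgf, rfl⟩⟩, ?_⟩
            have hmu' : MuStep R μ
                ((fun m => if cutC outS inS sv f m (ts m)
                    then dlt outS inS sv (inS f m) else capT outS inS sv (ts m)) j)
                (capT outS inS sv w) := by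
              show MuStep R μ (if cutC outS inS sv f j (ts j)
                then dlt outS inS sv (inS f j) else capT outS inS sv (ts j)) _
              rw [if_neg hc]; exact hmu
            have hlift := MuStep_lift (R := R) (μ := μ)
              (ts := fun m => if cutC outS inS sv f m (ts m)
                then dlt outS inS sv (inS f m) else capT outS inS sv (ts m)) j hμ hmu'
            rw [hcT, hu, hcU, if_neg hc']
            exact hlift
          · intro hndh
            rw [halT, if_neg hc, hu, halU, if_neg hc']
            exact add_le_add (hnd hndh) (le_refl restT)
        · right; left
          constructor
          · rw [hcT, hu, hcU, if_neg hc']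
            congr 1
            funext m
            by_cases hm : m = j
            · subst hm
              rw [Function.update_self, if_neg hc, hcape]
            · rw [Function.update_of_ne hm]
          · refine ⟨W₀ + restT, a, a', ?_, ?_, hstp⟩
            · rw [halT, if_neg hc, h1, Multiset.cons_add]
            · rw [hu, halU, if_neg hc', h2, Multiset.cons_add]
        · right; right
          refine ⟨hcol, W₀ + restT, X, Y, x₀, ?_, ?_, hx₀, hdom⟩
          · rw [halT, if_neg hc, h1, add_right_comm]
          · rw [hu, halU, if_neg hc', h2, add_right_comm]

end Dev4
section Dev5

set_option linter.unusedSectionVars false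
set_option maxHeartbeats 1000000

open Classical

variable {F : Type} {ar : F → ℕ} {V S : Type} [DecidableEq V]
variable {outS : F → S} {inS : ∀ f : F, Fin (ar f) → S} {sv : V → S}
variable {R : Set (Rule F ar V)} {μ : (f : F) → Fin (ar f) → Prop}

lemma acc_no_chain {α : Type*} {r : α → α → Prop} {a : α}
    (h : Acc (fun y x => r x y) a) :
    ∀ g : ℕ → α, g 0 = a → ¬ (∀ n, r (g n) (g (n + 1))) := by
  induction h with
  | intro x hx ih =>
    intro g hg hstep
    exact ih (g 1) (hg ▸ hstep 0) (fun n => g (n + 1)) rfl (fun n => hstep (n + 1))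

lemma wf_no_chain {α : Type*} {r : α → α → Prop} (h : WellFounded r) (f : ℕ → α)
    (hf : ∀ n, r (f (n + 1)) (f n)) : False :=
  acc_no_chain (r := fun x y => r y x) (h.apply (f 0)) f rfl hf

lemma nonacc_chain {α : Type*} {r : α → α → Prop} {a : α} (h : ¬ Acc r a) :
    ∃ g : ℕ → α, g 0 = a ∧ ∀ n, r (g (n + 1)) (g n) := by
  have step : ∀ x : {x : α // ¬ Acc r x}, ∃ y : {y : α // ¬ Acc r y}, r y.1 x.1 := by
    rintro ⟨x, hx⟩
    have : ∃ y, r y x ∧ ¬ Acc r y := by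
      by_contra hno
      push_neg at hno
      exact hx (Acc.intro x (fun y hy => hno y hy))
    obtain ⟨y, hy1, hy2⟩ := this
    exact ⟨⟨y, hy2⟩, hy1⟩
  choose nxt hnxt using step
  let g : ℕ → {x : α // ¬ Acc r x} := fun n => Nat.rec ⟨a, h⟩ (fun _ p => nxt p) n
  exact ⟨fun n => (g n).1, rfl, fun n => hnxt (g n)⟩

lemma mustep_rank_le [Nonempty (Tm F ar V)] (hTRS : IsTRS R)
    (hWSrules : ∀ lr ∈ R, ∃ s : S, WS outS inS sv lr.1 s ∧ WS outS inS sv lr.2 s)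
    {v v' : Tm F ar V} (h : MuStep R μ v v') :
    rank outS inS sv v' ≤ rank outS inS sv v := by
  obtain ⟨p, hr, -⟩ := h
  exact rank_step hTRS hWSrules hr

lemma capstep_wf
    (hsortedSN : ¬ ∃ g : ℕ → Tm F ar V,
        (∀ n, ∃ s : S, WS outS inS sv (g n) s) ∧
        ∀ n, MuStep R μ (g n) (g (n + 1))) :
    WellFounded (fun c' c => CapStep outS inS sv R μ c c') := by
  constructor
  intro a
  by_contra hna
  obtain ⟨g, -, hchain⟩ := nonacc_chain hna
  exact hsortedSN ⟨g, fun n => (hchain n).1, fun n => (hchain n).2.2⟩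

/-- The guarded decrease relation on aliens. -/
def OD (outS : F → S) (inS : ∀ f : F, Fin (ar f) → S) (sv : V → S)
    (R : Set (Rule F ar V)) (μ : (f : F) → Fin (ar f) → Prop) (k : ℕ)
    (y x : Tm F ar V) : Prop :=
  Osucc outS inS sv R μ x y ∧ rank outS inS sv x < k

lemma OD_acc [Nonempty (Tm F ar V)] (hTRS : IsTRS R)
    (hWSrules : ∀ lr ∈ R, ∃ s : S, WS outS inS sv lr.1 s ∧ WS outS inS sv lr.2 s)
    {k : ℕ}
    (H : ∀ t : Tm F ar V, rank outS inS sv t < k → Acc (fun y x => MuStep R μ x y) t) :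
    ∀ (m : ℕ) (x : Tm F ar V), rank outS inS sv x ≤ m → Acc (OD outS inS sv R μ k) x := by
  intro m
  induction m using Nat.strong_induction_on with
  | _ m ihm =>
    intro x hxm
    by_cases hk : rank outS inS sv x < k
    · have hacc : Acc (fun y x => MuStep R μ x y) x := H x hk
      clear hk
      revert hxm
      induction hacc with
      | intro z hz ihz =>
        intro hzm
        refine Acc.intro z (fun y hy => ?_)
        rcases hy with ⟨ho, hzk⟩
        rcases ho with hstep | ⟨w, hw, hyw⟩ | hyal
        · exact ihz y hstep (le_trans (mustep_rank_le hTRS hWSrules hstep) hzm)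
        · have h1 : rank outS inS sv y < rank outS inS sv w := mem_aliens_rank_lt hyw
          have h2 : rank outS inS sv w ≤ rank outS inS sv z :=
            mustep_rank_le hTRS hWSrules hw
          exact ihm (rank outS inS sv y) (by omega) y (le_refl _)
        · have h1 : rank outS inS sv y < rank outS inS sv z := mem_aliens_rank_lt hyal
          exact ihm (rank outS inS sv y) (by omega) y (le_refl _)
    · exact Acc.intro x (fun y hy => absurd hy.2 hk)

/-- Dershowitz-Manna style multiset decrease with a single dominator. -/
def DMlt {α : Type*} (o : α → α → Prop) (M N : Multiset α) : Prop :=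
  ∃ W X Y x₀, N = W + X ∧ M = W + Y ∧ x₀ ∈ X ∧ ∀ y ∈ Y, o x₀ y

lemma dm_acc_le {α : Type*} {o : α → α → Prop} {M W : Multiset α}
    (hM : Acc (DMlt o) M) (hle : W ≤ M) : Acc (DMlt o) W := by
  obtain ⟨D, hD⟩ := Multiset.le_iff_exists_add.1 hle
  by_cases hD0 : D = 0
  · rw [hD0, add_zero] at hD; rwa [← hD]
  · obtain ⟨d, hd⟩ := Multiset.exists_mem_of_ne_zero hD0
    exact hM.inv ⟨W, D, 0, d, hD, (add_zero W).symm, hd, fun y hy =>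
      absurd hy (Multiset.notMem_zero y)⟩

lemma dm_key {α : Type*} {o : α → α → Prop} {x : α}
    (hx : Acc (fun y x => o x y) x) :
    ∀ M : Multiset α, Acc (DMlt o) M → Acc (DMlt o) (x ::ₘ M) := by
  induction hx with
  | intro x hxp ih1 =>
    intro M hM
    induction hM with
    | intro M hMp ihM =>
      refine Acc.intro _ (fun N hN => ?_)
      obtain ⟨W, X, Y, x₀, hNX, hNY, hx₀, hdom⟩ := hN
      have hxmem : x ∈ W + X := by rw [← hNX]; exact Multiset.mem_cons_self x M
      rcases Multiset.mem_add.1 hxmem with hxW | hxX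
      · -- x is untouched
        have hW : W = x ::ₘ W.erase x := (Multiset.cons_erase hxW).symm
        have hM' : M = W.erase x + X := by
          have h2 : x ::ₘ M = x ::ₘ (W.erase x + X) := by
            rw [hNX]
            conv_lhs => rw [hW]
            rw [Multiset.cons_add]
          exact (Multiset.cons_inj_right x).1 h2
        have hdm : DMlt o (W.erase x + Y) M := ⟨W.erase x, X, Y, x₀, hM', rfl, hx₀, hdom⟩
        have hres := ihM _ hdm
        rw [hNY, hW, Multiset.cons_add]
        exact hres
      · -- x is removed
        have hX : X = x ::ₘ X.erase x := (Multiset.cons_erase hxX).symm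
        have hM' : M = W + X.erase x := by
          have h2 : x ::ₘ M = x ::ₘ (W + X.erase x) := by
            rw [hNX]
            conv_lhs => rw [hX]
            rw [add_comm W (x ::ₘ X.erase x), Multiset.cons_add, add_comm (X.erase x) W]
          exact (Multiset.cons_inj_right x).1 h2
        rw [hX] at hx₀
        rcases Multiset.mem_cons.1 hx₀ with hx₀x | hx₀X'
        · -- the dominator is x itself
          rw [hx₀x] at hdom
          have hAccW : Acc (DMlt o) W :=
            dm_acc_le (Acc.intro M hMp) (hM' ▸ Multiset.le_iff_exists_add.2 ⟨X.erase x, rfl⟩)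
          have : ∀ Y' : Multiset α, (∀ y ∈ Y', o x y) → Acc (DMlt o) (W + Y') := by
            intro Y'
            induction Y' using Multiset.induction with
            | empty => intro _; rwa [add_zero]
            | cons y Y' ihY =>
              intro hdom'
              rw [← Multiset.singleton_add, ← add_assoc, add_comm W {y}, Multiset.singleton_add,
                Multiset.cons_add]
              exact ih1 y (hdom' y (Multiset.mem_cons_self y Y')) _
                (ihY (fun z hz => hdom' z (Multiset.mem_cons_of_mem hz)))
          rw [hNY]
          exact this Y hdom
        · -- the dominator survives in M
          have hdm : DMlt o N M := ⟨W, X.erase x, Y, x₀, hM', hNY, hx₀X', hdom⟩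
          exact hMp _ hdm

lemma dm_wf {α : Type*} {o : α → α → Prop} (ho : WellFounded (fun y x => o x y)) :
    WellFounded (DMlt o) := by
  constructor
  intro M
  induction M using Multiset.induction with
  | empty =>
    refine Acc.intro _ (fun N hN => ?_)
    obtain ⟨W, X, Y, x₀, hNX, -, hx₀, -⟩ := hN
    exfalso
    have : X = 0 := by
      have hc := congrArg Multiset.card hNX
      rw [Multiset.card_zero, Multiset.card_add] at hc
      exact Multiset.card_eq_zero.1 (by omega)
    rw [this] at hx₀
    exact Multiset.notMem_zero x₀ hx₀
  | cons x M ihM => exact dm_key (ho.apply x) M ihM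

end Dev5
section Dev6

set_option linter.unusedSectionVars false
set_option maxHeartbeats 1000000

open Classical

variable {F : Type} {ar : F → ℕ} {V S : Type} [DecidableEq V]
variable {outS : F → S} {inS : ∀ f : F, Fin (ar f) → S} {sv : V → S}
variable {R : Set (Rule F ar V)} {μ : (f : F) → Fin (ar f) → Prop}
variable [Nonempty (Tm F ar V)]

lemma step_noncoll (hTRS : IsTRS R)
    (hWSrules : ∀ lr ∈ R, ∃ s : S, WS outS inS sv lr.1 s ∧ WS outS inS sv lr.2 s)
    (hsortedSN : ¬ ∃ g : ℕ → Tm F ar V,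
        (∀ n, ∃ s : S, WS outS inS sv (g n) s) ∧
        ∀ n, MuStep R μ (g n) (g (n + 1)))
    {k : ℕ}
    (H : ∀ t : Tm F ar V, rank outS inS sv t < k → Acc (fun y x => MuStep R μ x y) t)
    (hnc : ¬ ∃ (l : Tm F ar V) (x : V), (l, Tm.var x) ∈ R) :
    ∀ t : Tm F ar V, rank outS inS sv t ≤ k → Acc (fun y x => MuStep R μ x y) t := by
  intro t htk
  by_contra hna
  obtain ⟨g, hg0, hchain⟩ := nonacc_chain hna
  have hrank : ∀ n, rank outS inS sv (g n) ≤ k := by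
    intro n
    induction n with
    | zero => rw [hg0]; exact htk
    | succ n ihn => exact le_trans (mustep_rank_le hTRS hWSrules (hchain n)) ihn
  have hodwf : WellFounded (OD outS inS sv R μ k) := by
    constructor
    intro x
    exact OD_acc hTRS hWSrules H (rank outS inS sv x) x (le_refl _)
  set o : Tm F ar V → Tm F ar V → Prop := fun x y => OD outS inS sv R μ k y x with ho
  have hwf : WellFounded (Prod.Lex (fun c' c => CapStep outS inS sv R μ c c') (DMlt o)) :=
    WellFounded.prod_lex (capstep_wf hsortedSN) (dm_wf hodwf)
  refine wf_no_chain hwf (fun n => (capT outS inS sv (g n), aliens outS inS sv (g n)))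
    (fun n => ?_)
  obtain ⟨p, hrw, hmp⟩ := hchain n
  rcases class_lemma hTRS hWSrules hrw hmp with ⟨⟨hw1, hw2, hmu⟩, -⟩
    | ⟨hcape, W, a, a', h1, h2, hstp⟩ | ⟨hcol, -⟩
  · exact Prod.Lex.left _ _ ⟨hw1, hw2, hmu⟩
  · have hak : rank outS inS sv a < k :=
      lt_of_lt_of_le (mem_aliens_rank_lt (h1 ▸ Multiset.mem_cons_self a W)) (hrank n)
    rw [hcape]
    refine Prod.Lex.right _ ?_
    refine ⟨W, {a}, {a'}, a, ?_, ?_, Multiset.mem_singleton_self a, ?_⟩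
    · rw [h1, ← Multiset.singleton_add, add_comm]
    · rw [h2, ← Multiset.singleton_add, add_comm]
    · intro y hy
      rw [Multiset.mem_singleton.1 hy]
      exact ⟨Or.inl hstp, hak⟩
  · exact absurd hcol hnc

lemma step_nondup (hTRS : IsTRS R)
    (hWSrules : ∀ lr ∈ R, ∃ s : S, WS outS inS sv lr.1 s ∧ WS outS inS sv lr.2 s)
    (hsortedSN : ¬ ∃ g : ℕ → Tm F ar V,
        (∀ n, ∃ s : S, WS outS inS sv (g n) s) ∧
        ∀ n, MuStep R μ (g n) (g (n + 1)))
    {k : ℕ}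
    (H : ∀ t : Tm F ar V, rank outS inS sv t < k → Acc (fun y x => MuStep R μ x y) t)
    (hnd : ∀ lr ∈ R, ∀ x : V, countV x lr.2 ≤ countV x lr.1) :
    ∀ t : Tm F ar V, rank outS inS sv t ≤ k → Acc (fun y x => MuStep R μ x y) t := by
  intro t htk
  by_contra hna
  obtain ⟨g, hg0, hchain⟩ := nonacc_chain hna
  have hrank : ∀ n, rank outS inS sv (g n) ≤ k := by
    intro n
    induction n with
    | zero => rw [hg0]; exact htk
    | succ n ihn => exact le_trans (mustep_rank_le hTRS hWSrules (hchain n)) ihn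
  have hodwf : WellFounded (OD outS inS sv R μ k) := by
    constructor
    intro x
    exact OD_acc hTRS hWSrules H (rank outS inS sv x) x (le_refl _)
  set o : Tm F ar V → Tm F ar V → Prop := fun x y => OD outS inS sv R μ k y x with ho
  have hwf : WellFounded (Prod.Lex (DMlt o) (fun c' c => CapStep outS inS sv R μ c c')) :=
    WellFounded.prod_lex (dm_wf hodwf) (capstep_wf hsortedSN)
  refine wf_no_chain hwf (fun n => (aliens outS inS sv (g n), capT outS inS sv (g n)))
    (fun n => ?_)
  obtain ⟨p, hrw, hmp⟩ := hchain n
  rcases class_lemma hTRS hWSrules hrw hmp with ⟨⟨hw1, hw2, hmu⟩, hle⟩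
    | ⟨hcape, W, a, a', h1, h2, hstp⟩ | ⟨hcol, W, X, Y, x₀, h1, h2, hx₀, hdom⟩
  · obtain ⟨D, hD⟩ := Multiset.le_iff_exists_add.1 (hle hnd)
    by_cases hD0 : D = 0
    · rw [hD0, add_zero] at hD
      rw [hD]
      exact Prod.Lex.right _ ⟨hw1, hw2, hmu⟩
    · obtain ⟨d, hd⟩ := Multiset.exists_mem_of_ne_zero hD0
      exact Prod.Lex.left _ _ ⟨aliens outS inS sv (g (n + 1)), D, 0, d, hD,
        (add_zero _).symm, hd, fun y hy => absurd hy (Multiset.notMem_zero y)⟩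
  · have hak : rank outS inS sv a < k :=
      lt_of_lt_of_le (mem_aliens_rank_lt (h1 ▸ Multiset.mem_cons_self a W)) (hrank n)
    refine Prod.Lex.left _ _ ⟨W, {a}, {a'}, a, ?_, ?_, Multiset.mem_singleton_self a, ?_⟩
    · rw [h1, ← Multiset.singleton_add, add_comm]
    · rw [h2, ← Multiset.singleton_add, add_comm]
    · intro y hy
      rw [Multiset.mem_singleton.1 hy]
      exact ⟨Or.inl hstp, hak⟩
  · have hxk : rank outS inS sv x₀ < k :=
      lt_of_lt_of_le (mem_aliens_rank_lt (h1 ▸ Multiset.mem_add.2 (Or.inr hx₀))) (hrank n)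
    exact Prod.Lex.left _ _ ⟨W, X, Y, x₀, h1, h2, hx₀, fun y hy => ⟨hdom y hy, hxk⟩⟩

lemma sn_all (hTRS : IsTRS R)
    (hWSrules : ∀ lr ∈ R, ∃ s : S, WS outS inS sv lr.1 s ∧ WS outS inS sv lr.2 s)
    (hsortedSN : ¬ ∃ g : ℕ → Tm F ar V,
        (∀ n, ∃ s : S, WS outS inS sv (g n) s) ∧
        ∀ n, MuStep R μ (g n) (g (n + 1)))
    (hside : (¬ ∃ (l : Tm F ar V) (x : V), (l, Tm.var x) ∈ R) ∨
      (∀ lr ∈ R, ∀ x : V, countV x lr.2 ≤ countV x lr.1)) :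
    ∀ t : Tm F ar V, Acc (fun y x => MuStep R μ x y) t := by
  have main : ∀ (k : ℕ) (t : Tm F ar V), rank outS inS sv t ≤ k →
      Acc (fun y x => MuStep R μ x y) t := by
    intro k
    induction k using Nat.strong_induction_on with
    | _ k ihk =>
      have H : ∀ t' : Tm F ar V, rank outS inS sv t' < k →
          Acc (fun y x => MuStep R μ x y) t' :=
        fun t' h => ihk (rank outS inS sv t') h t' (le_refl _)
      rcases hside with hnc | hnd
      · exact step_noncoll hTRS hWSrules hsortedSN H hnc
      · exact step_nondup hTRS hWSrules hsortedSN H hnd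
  exact fun t => main (rank outS inS sv t) t (le_refl _)

end Dev6
/-- Theorem 5.13, adapted from Ohlebusch: if the many-sorted
    context-sensitive TRS `(R, μ)` is terminating (on well-sorted terms), but the
    context-sensitive TRS obtained by dropping the sorts admits an infinite rewrite
    sequence, then `R` is collapsing and duplicating. -/
theorem dropping_sorts {F : Type} {ar : F → ℕ} {V S : Type} [DecidableEq V]
    (outS : F → S) (inS : ∀ f : F, Fin (ar f) → S) (sv : V → S)
    (R : Set (Rule F ar V)) (hTRS : IsTRS R) (hfin : R.Finite)
    (μ : (f : F) → Fin (ar f) → Prop)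
    (hWSrules : ∀ lr ∈ R, ∃ s : S, WS outS inS sv lr.1 s ∧ WS outS inS sv lr.2 s)
    (hsortedSN : ¬ ∃ g : ℕ → Tm F ar V,
        (∀ n, ∃ s : S, WS outS inS sv (g n) s) ∧
        ∀ n, MuStep R μ (g n) (g (n + 1)))
    (hinf : ∃ g : ℕ → Tm F ar V, ∀ n, MuStep R μ (g n) (g (n + 1))) :
    (∃ lr ∈ R, ∃ x : V, lr.2 = Tm.var x) ∧
    (∃ lr ∈ R, ∃ x : V, countV x lr.1 < countV x lr.2) := by
  obtain ⟨g, hgstep⟩ := hinf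
  haveI : Nonempty (Tm F ar V) := ⟨g 0⟩
  constructor
  · by_contra hnc
    have hnc' : ¬ ∃ (l : Tm F ar V) (x : V), (l, Tm.var x) ∈ R := by
      rintro ⟨l, x, h⟩
      exact hnc ⟨(l, Tm.var x), h, x, rfl⟩
    exact acc_no_chain (sn_all hTRS hWSrules hsortedSN (Or.inl hnc') (g 0)) g rfl hgstep
  · by_contra hnd
    push_neg at hnd
    have hnd' : ∀ lr ∈ R, ∀ x : V, countV x lr.2 ≤ countV x lr.1 :=
      fun lr h x => hnd lr h x
    exact acc_no_chain (sn_all hTRS hWSrules hsortedSN (Or.inr hnd') (g 0)) g rfl hgstep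

end Stmt
end

section
/- A TRS R over Σ is outermost terminating if R over the extended signature Σ ∪ {s, 0} (s a fresh unary symbol, 0 a fresh constant) is outermost ground terminating. Moreover, if R is quasi-left-linear, the converse also holds. -/
namespace Stmt

open TRSStmt

/-- The signature extended with a fresh unary symbol `s` (`Sum.inr true`)
    and a fresh constant `0` (`Sum.inr false`). -/
abbrev arExt {F : Type} (ar : F → ℕ) : F ⊕ Bool → ℕ :=
  Sum.elim ar (fun b => cond b 1 0)

/-- Inclusion of terms over `Σ` into terms over `Σ ∪ {s, 0}`. -/
def liftTm {F : Type} {ar : F → ℕ} {V : Type} :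
    TRSStmt.Tm F ar V → TRSStmt.Tm (F ⊕ Bool) (arExt ar) V
  | .var x => .var x
  | .app f ts => .app (Sum.inl f) (fun i => liftTm (ts i))

/-- The TRS `R` viewed over the extended signature. -/
def liftTRS {F : Type} {ar : F → ℕ} {V : Type} (R : Set (Rule F ar V)) :
    Set (Rule (F ⊕ Bool) (arExt ar) V) :=
  { p | ∃ lr ∈ R, p = (liftTm lr.1, liftTm lr.2) }

namespace TRSAux
open TRSStmt
attribute [local instance 10] Classical.propDecidable
variable {F : Type} {ar : F → ℕ} {V W A : Type}

section Aux

theorem subAt_append (t : Tm F ar V) (p q : List ℕ) :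
    t.subAt (p ++ q) = (t.subAt p).bind (·.subAt q) := by
  induction p generalizing t with
  | nil => simp [Tm.subAt]
  | cons i p ih =>
    cases t with
    | var x => simp [Tm.subAt]
    | app f ts =>
      simp only [List.cons_append, Tm.subAt]
      split
      · exact ih _
      · rfl

theorem subAt_prefix {t : Tm F ar V} {p q : List ℕ} {v : Tm F ar V}
    (hq : q <+: p) (h : t.subAt p = some v) : ∃ w, t.subAt q = some w := by
  obtain ⟨r, rfl⟩ := hq
  rw [subAt_append] at h
  cases hw : t.subAt q with
  | none => rw [hw] at h; simp at h
  | some w => exact ⟨w, rfl⟩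

theorem replaceAt_append_decomp {t u w : Tm F ar V} {q p : List ℕ} {v : Tm F ar V}
    (hw : t.subAt q = some w) (h : t.replaceAt (q ++ p) v = some u) :
    ∃ w', w.replaceAt p v = some w' ∧ u.subAt q = some w' := by
  induction q generalizing t u with
  | nil =>
    simp [Tm.subAt] at hw
    subst hw
    exact ⟨u, h, by simp [Tm.subAt]⟩
  | cons i q ih =>
    cases t with
    | var x => simp [Tm.subAt] at hw
    | app f ts =>
      simp only [Tm.subAt] at hw
      simp only [List.cons_append, Tm.replaceAt, List.append_eq] at h
      split at h
      · next hi =>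
        simp only [hi, dif_pos] at hw
        cases hu' : (ts ⟨i, hi⟩).replaceAt (q ++ p) v with
        | none => rw [hu'] at h; simp at h
        | some u' =>
          rw [hu'] at h; simp at h
          obtain ⟨w', h1, h2⟩ := ih hw hu'
          refine ⟨w', h1, ?_⟩
          rw [← h]
          simp [Tm.subAt, hi, Function.update_self, h2]
      · simp at h

theorem replaceAt_incomp {t u : Tm F ar V} {p r : List ℕ} {v : Tm F ar V}
    (h : t.replaceAt p v = some u) (h1 : ¬ p <+: r) (h2 : ¬ r <+: p) :
    u.subAt r = t.subAt r := by
  induction p generalizing t u r with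
  | nil => exact absurd List.nil_prefix h1
  | cons i p ih =>
    cases r with
    | nil => exact absurd List.nil_prefix h2
    | cons j r =>
      cases t with
      | var x => simp [Tm.replaceAt] at h
      | app f ts =>
        simp only [Tm.replaceAt] at h
        split at h
        · next hi =>
          cases hu' : (ts ⟨i, hi⟩).replaceAt p v with
          | none => rw [hu'] at h; simp at h
          | some u' =>
            rw [hu'] at h; simp at h
            subst h
            by_cases hij : i = j
            · subst hij
              simp only [Tm.subAt]
              split
              · next hj =>
                rw [Function.update_self]
                exact ih hu' (fun hc => h1 (List.cons_prefix_cons.mpr ⟨rfl, hc⟩))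
                  (fun hc => h2 (List.cons_prefix_cons.mpr ⟨rfl, hc⟩))
              · next hj => exact absurd hi hj
            · simp only [Tm.subAt]
              split
              · next hj =>
                rw [Function.update_of_ne (by simp [Fin.ext_iff]; omega)]
              · rfl
        · simp at h

theorem replaceAt_prefix_root {t u : Tm F ar V} {p r : List ℕ} {v w : Tm F ar V}
    (h : t.replaceAt p v = some u) (hr : r <+: p) (hne : r ≠ p)
    (hw : t.subAt r = some w) :
    ∃ w', u.subAt r = some w' ∧ w.rootSym = w'.rootSym := by
  induction r generalizing t u p with
  | nil =>
    simp [Tm.subAt] at hw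
    subst hw
    cases p with
    | nil => exact absurd rfl hne
    | cons i p =>
      cases t with
      | var x => simp [Tm.replaceAt] at h
      | app f ts =>
        simp only [Tm.replaceAt] at h
        split at h
        · cases hu' : (ts ⟨i, ‹i < ar f›⟩).replaceAt p v with
          | none => rw [hu'] at h; simp at h
          | some u' =>
            rw [hu'] at h; simp at h
            refine ⟨u, by simp [Tm.subAt], ?_⟩
            rw [← h]
            rfl
        · simp at h
  | cons j r ih =>
    cases p with
    | nil => exact absurd hr (by simp)
    | cons i p =>
      obtain ⟨rfl, hr'⟩ := List.cons_prefix_cons.mp hr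
      cases t with
      | var x => simp [Tm.replaceAt] at h
      | app f ts =>
        simp only [Tm.replaceAt] at h
        split at h
        · next hi =>
          cases hu' : (ts ⟨j, hi⟩).replaceAt p v with
          | none => rw [hu'] at h; simp at h
          | some u' =>
            rw [hu'] at h; simp at h
            simp only [Tm.subAt, dif_pos hi] at hw
            have hne' : r ≠ p := by rintro rfl; exact hne rfl
            obtain ⟨w', h1, h2⟩ := ih hu' hr' hne' hw
            refine ⟨w', ?_, h2⟩
            rw [← h]
            simp [Tm.subAt, hi, Function.update_self, h1]
        · simp at h

theorem subst_congr {t : Tm F ar V} {σ σ' : V → Tm F ar W}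
    (h : ∀ x, t.occurs x → σ x = σ' x) : t.subst σ = t.subst σ' := by
  induction t with
  | var x => exact h x rfl
  | app f ts ih =>
    simp only [Tm.subst]
    congr 1
    funext i
    exact ih i (fun x hx => h x ⟨i, hx⟩)

theorem subst_subst {U : Type} (t : Tm F ar V) (σ : V → Tm F ar W) (τ : W → Tm F ar U) :
    (t.subst σ).subst τ = t.subst (fun x => (σ x).subst τ) := by
  induction t with
  | var x => rfl
  | app f ts ih =>
    simp only [Tm.subst]
    congr 1
    funext i
    exact ih i

theorem subst_occurs {t : Tm F ar V} {σ : V → Tm F ar W} {y : W}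
    (h : (t.subst σ).occurs y) : ∃ x, t.occurs x ∧ (σ x).occurs y := by
  induction t with
  | var x => exact ⟨x, rfl, h⟩
  | app f ts ih =>
    obtain ⟨i, hi⟩ := h
    obtain ⟨x, h1, h2⟩ := ih i hi
    exact ⟨x, ⟨i, h1⟩, h2⟩

end Aux

section Lin
variable [DecidableEq V]

theorem occurs_iff_countV_pos {x : V} {t : Tm F ar V} :
    t.occurs x ↔ 0 < countV x t := by
  induction t with
  | var y => simp [Tm.occurs, countV]; split <;> simp_all
  | app f ts ih =>
    simp only [Tm.occurs, countV]
    constructor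
    · rintro ⟨i, hi⟩
      exact lt_of_lt_of_le ((ih i).mp hi)
        (Finset.single_le_sum (f := fun j => countV x (ts j)) (fun j _ => Nat.zero_le _)
          (Finset.mem_univ i))
    · intro hpos
      by_contra hno
      push_neg at hno
      rw [Finset.sum_eq_zero (fun i _ => Nat.eq_zero_of_not_pos
        (fun hp => hno i ((ih i).mpr hp)))] at hpos
      omega

theorem linear_child {f : F} {ts : Fin (ar f) → Tm F ar V} (h : Linear (Tm.app f ts))
    (i : Fin (ar f)) : Linear (ts i) := by
  intro x
  have hx := h x
  simp only [countV] at hx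
  exact le_trans (Finset.single_le_sum (f := fun j => countV x (ts j))
    (fun j _ => Nat.zero_le _) (Finset.mem_univ i)) hx

theorem linear_unique_child {f : F} {ts : Fin (ar f) → Tm F ar V} (h : Linear (Tm.app f ts))
    {x : V} {i j : Fin (ar f)} (hi : (ts i).occurs x) (hj : (ts j).occurs x) : i = j := by
  by_contra hne
  have hx := h x
  simp only [countV] at hx
  have h1 := occurs_iff_countV_pos.mp hi
  have h2 := occurs_iff_countV_pos.mp hj
  have hsub : (({i, j} : Finset (Fin (ar f))).sum fun k => countV x (ts k)) ≤
      ∑ k, countV x (ts k) :=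
    Finset.sum_le_sum_of_subset (Finset.subset_univ _)
  rw [Finset.sum_pair hne] at hsub
  omega

end Lin

section Dir1
open Stmt

def num (F : Type) (ar : F → ℕ) : ℕ → Tm (F ⊕ Bool) (arExt ar) Empty
  | 0 => .app (Sum.inr false) (fun i => i.elim0)
  | n+1 => .app (Sum.inr true) (fun _ => num F ar n)

theorem num_inj {n m : ℕ} (h : num F ar n = num F ar m) : n = m := by
  induction n generalizing m with
  | zero => cases m with
    | zero => rfl
    | succ m => exact absurd (congrArg Tm.rootSym h) (by simp [num, Tm.rootSym])
  | succ n ih =>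
    cases m with
    | zero => exact absurd (congrArg Tm.rootSym h) (by simp [num, Tm.rootSym])
    | succ m =>
      simp only [num, Tm.app.injEq, heq_eq_eq, true_and] at h
      exact congrArg Nat.succ (ih (congrFun h ⟨0, Nat.one_pos⟩))

def enc (φ : V → ℕ) : Tm F ar V → Tm (F ⊕ Bool) (arExt ar) Empty
  | .var x => num F ar (φ x)
  | .app f ts => .app (Sum.inl f) (fun i => enc φ (ts i))

theorem num_ne_enc_app (φ : V → ℕ) (k : ℕ) (f : F) (ts : Fin (ar f) → Tm F ar V) :
    num F ar k ≠ enc φ (Tm.app f ts) := by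
  intro h
  have := congrArg Tm.rootSym h
  cases k <;> simp [num, enc, Tm.rootSym] at this

theorem enc_inj {φ : V → ℕ} (hφ : Function.Injective φ) :
    Function.Injective (enc (F := F) (ar := ar) φ) := by
  intro t
  induction t with
  | var x =>
    intro u h
    cases u with
    | var y => exact congrArg Tm.var (hφ (num_inj h))
    | app g us => exact absurd h (num_ne_enc_app φ _ g us)
  | app f ts ih =>
    intro u h
    cases u with
    | var y => exact absurd h.symm (num_ne_enc_app φ _ f ts)
    | app g us =>
      simp only [enc, Tm.app.injEq, Sum.inl.injEq] at h
      obtain ⟨rfl, h2⟩ := h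
      simp only [heq_eq_eq] at h2
      congr 1
      funext i
      exact ih i (congrFun h2 i)

theorem enc_subAt {φ : V → ℕ} {t v : Tm F ar V} {p : List ℕ}
    (h : t.subAt p = some v) : (enc φ t).subAt p = some (enc φ v) := by
  induction p generalizing t with
  | nil => simp [Tm.subAt] at h ⊢; rw [h]
  | cons i p ih =>
    cases t with
    | var x => simp [Tm.subAt] at h
    | app f ts =>
      simp only [Tm.subAt] at h
      split at h
      · next hi => exact (by simpa [enc, Tm.subAt, hi] using ih h)
      · simp at h

theorem enc_replaceAt {φ : V → ℕ} {t v u : Tm F ar V} {p : List ℕ}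
    (h : t.replaceAt p v = some u) :
    (enc φ t).replaceAt p (enc φ v) = some (enc φ u) := by
  induction p generalizing t u with
  | nil => simp [Tm.replaceAt] at h ⊢; rw [h]
  | cons i p ih =>
    cases t with
    | var x => simp [Tm.replaceAt] at h
    | app f ts =>
      simp only [Tm.replaceAt] at h
      split at h
      · next hi =>
        cases hu' : (ts ⟨i, hi⟩).replaceAt p v with
        | none => rw [hu'] at h; simp at h
        | some u' =>
          rw [hu'] at h; simp at h
          subst h
          have h2 := ih hu'
          simp only [enc, Tm.replaceAt]
          rw [dif_pos (show i < arExt ar (Sum.inl f) from hi)]; erw [h2]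
          simp only [Option.map_some, Option.some.injEq]
          congr 1
          funext j
          by_cases hj : j = ⟨i, hi⟩
          · subst hj; erw [Function.update_self, Function.update_self]
          · erw [Function.update_of_ne hj, Function.update_of_ne hj]
      · simp at h

theorem enc_subst (φ : V → ℕ) (t : Tm F ar V) (σ : V → Tm F ar V) :
    enc φ (t.subst σ) = (liftTm t).subst (fun x => enc φ (σ x)) := by
  induction t with
  | var x => rfl
  | app f ts ih =>
    simp only [Tm.subst, enc, liftTm]
    congr 1
    funext i
    exact ih i

end Dir1

section Dir1b
open Stmt

theorem num_is_inr (k : ℕ) : ∃ b ws, num F ar k = Tm.app (Sum.inr b) ws := by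
  cases k with
  | zero => exact ⟨false, _, rfl⟩
  | succ n => exact ⟨true, _, rfl⟩

theorem enc_match_pullback {φ : V → ℕ} (hφ : Function.Injective φ)
    (τ : V → Tm (F ⊕ Bool) (arExt ar) Empty) (d : Tm F ar V) :
    ∀ (l : Tm F ar V) (s : Tm F ar V), (liftTm l).subst τ = enc φ s →
      l.subst (fun x => if h : ∃ u : Tm F ar V, enc φ u = τ x then h.choose else d) = s := by
  intro l
  induction l with
  | var x =>
    intro s hs
    simp only [liftTm, Tm.subst] at hs
    have hex : ∃ u : Tm F ar V, enc φ u = τ x := ⟨s, hs.symm⟩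
    simp only [Tm.subst, dif_pos hex]
    exact enc_inj hφ (hex.choose_spec.trans hs)
  | app f ts ih =>
    intro s hs
    cases s with
    | var y =>
      obtain ⟨b, ws, hb⟩ := num_is_inr (F := F) (ar := ar) (φ y)
      simp only [liftTm, Tm.subst, enc, hb, Tm.app.injEq] at hs
      exact absurd hs.1 (by simp)
    | app g ss =>
      simp only [liftTm, Tm.subst, enc, Tm.app.injEq, Sum.inl.injEq] at hs
      obtain ⟨rfl, h2⟩ := hs
      simp only [heq_eq_eq] at h2
      simp only [Tm.subst, Tm.app.injEq, heq_eq_eq, true_and]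
      funext i
      exact ih i (ss i) (congrFun h2 i)

theorem enc_redex_pullback {φ : V → ℕ} (hφ : Function.Injective φ)
    {R : Set (Rule F ar V)} {s : Tm F ar V}
    (h : IsRedex (liftTRS R) (enc φ s)) : IsRedex R s := by
  obtain ⟨lr', hlr', τ, hs⟩ := h
  obtain ⟨lr, hlr, rfl⟩ := hlr'
  exact ⟨lr, hlr, _, (enc_match_pullback hφ τ s lr.1 s hs.symm).symm⟩

theorem enc_ostep {φ : V → ℕ} (hφ : Function.Injective φ) {R : Set (Rule F ar V)}
    {t u : Tm F ar V} (h : OStep R t u) :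
    OStep (liftTRS R) (enc φ t) (enc φ u) := by
  obtain ⟨p, ⟨lr, hlr, σ, hsub, hrep⟩, hout⟩ := h
  refine ⟨p, ⟨(liftTm lr.1, liftTm lr.2), ⟨lr, hlr, rfl⟩, fun x => enc φ (σ x), ?_, ?_⟩, ?_⟩
  · rw [enc_subAt hsub, enc_subst]
  · have h2 := enc_replaceAt (φ := φ) hrep
    rwa [enc_subst] at h2
  · intro q hq hne s' hs' hred
    obtain ⟨v, hv⟩ := subAt_prefix hq hsub
    have h3 := enc_subAt (φ := φ) hv
    rw [hs'] at h3
    obtain rfl : s' = enc φ v := by injection h3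
    exact hout q hq hne v hv (enc_redex_pullback hφ hred)

end Dir1b

section Dir2
open Stmt

theorem ground_is_app {F' : Type} {ar' : F' → ℕ} (t : Tm F' ar' Empty) :
    ∃ f ts, t = Tm.app f ts := by
  cases t with
  | var x => exact x.elim
  | app f ts => exact ⟨f, ts, rfl⟩

def cap (z : V) : Tm (F ⊕ Bool) (arExt ar) Empty → Tm F ar V
  | .var x => x.elim
  | .app (Sum.inl f) ts => .app f (fun i => cap z (ts i))
  | .app (Sum.inr _) _ => .var z

/-- no proper prefix of `p` is `inr`-rooted in `t` -/
def NoInrPfx (t : Tm (F ⊕ Bool) (arExt ar) Empty) (p : List ℕ) : Prop :=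
  ∀ q, q <+: p → q ≠ p → ∀ b ws, t.subAt q ≠ some (.app (Sum.inr b) ws)

theorem noInrPfx_child {f : F} {ts : Fin (arExt ar (Sum.inl f)) → Tm (F ⊕ Bool) (arExt ar) Empty}
    {i : ℕ} {hi : i < arExt ar (Sum.inl f)} {p : List ℕ}
    (h : NoInrPfx (Tm.app (Sum.inl f) ts) (i :: p)) : NoInrPfx (ts ⟨i, hi⟩) p := by
  intro q hq hne b ws hsub
  refine h (i :: q) (List.cons_prefix_cons.mpr ⟨rfl, hq⟩) (by simp [hne]) b ws ?_
  simp only [Tm.subAt]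
  rw [dif_pos (show i < arExt ar (Sum.inl f) from hi)]
  exact hsub

theorem noInrPfx_of_prefix {t : Tm (F ⊕ Bool) (arExt ar) Empty} {p q : List ℕ}
    (h : NoInrPfx t p) (hq : q <+: p) : NoInrPfx t q := by
  intro r hr hne b ws hsub
  refine h r (hr.trans hq) ?_ b ws hsub
  intro hrp
  subst hrp
  exact hne ((hr.eq_of_length (le_antisymm hr.length_le hq.length_le)))

theorem cap_subAt {z : V} {t v : Tm (F ⊕ Bool) (arExt ar) Empty} {p : List ℕ}
    (h : t.subAt p = some v) (hno : NoInrPfx t p) :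
    (cap (F := F) (ar := ar) z t).subAt p = some (cap z v) := by
  induction p generalizing t with
  | nil => simp [Tm.subAt] at h ⊢; rw [h]
  | cons i p ih =>
    obtain ⟨f, ts, rfl⟩ := ground_is_app t
    cases f with
    | inr b => exact absurd rfl (hno [] (List.nil_prefix) (by simp) b ts)
    | inl f =>
      simp only [Tm.subAt] at h
      split at h
      · next hi =>
        have h2 := ih h (noInrPfx_child hno)
        simp only [cap, Tm.subAt]
        rw [dif_pos (show i < ar f from hi)]
        exact h2
      · simp at h

theorem cap_replaceAt {z : V} {t v u : Tm (F ⊕ Bool) (arExt ar) Empty} {p : List ℕ}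
    (h : t.replaceAt p v = some u) (hno : NoInrPfx t p) :
    (cap (F := F) (ar := ar) z t).replaceAt p (cap z v) = some (cap z u) := by
  induction p generalizing t u with
  | nil => simp [Tm.replaceAt] at h ⊢; rw [h]
  | cons i p ih =>
    obtain ⟨f, ts, rfl⟩ := ground_is_app t
    cases f with
    | inr b => exact absurd rfl (hno [] (List.nil_prefix) (by simp) b ts)
    | inl f =>
      simp only [Tm.replaceAt] at h
      split at h
      · next hi =>
        cases hu' : (ts ⟨i, hi⟩).replaceAt p v with
        | none => rw [hu'] at h; simp at h
        | some u' =>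
          rw [hu'] at h; simp at h
          subst h
          have h2 := ih hu' (noInrPfx_child hno)
          simp only [cap, Tm.replaceAt]
          rw [dif_pos (show i < ar f from hi)]; erw [h2]
          simp only [Option.map_some, Option.some.injEq]
          congr 1
          funext j
          by_cases hj : j = ⟨i, hi⟩
          · subst hj; erw [Function.update_self, Function.update_self]
          · erw [Function.update_of_ne hj, Function.update_of_ne hj]
      · simp at h

theorem cap_subst (z : V) (l : Tm F ar V) (σ : V → Tm (F ⊕ Bool) (arExt ar) Empty) :
    cap z ((liftTm l).subst σ) = l.subst (fun x => cap z (σ x)) := by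
  induction l with
  | var x => rfl
  | app f ts ih =>
    simp only [liftTm, Tm.subst, cap]
    congr 1
    funext i
    exact ih i

theorem cap_stutter {z : V} {t u v : Tm (F ⊕ Bool) (arExt ar) Empty} {p q : List ℕ}
    {b : Bool} {ws : Fin (arExt ar (Sum.inr b)) → Tm (F ⊕ Bool) (arExt ar) Empty}
    (h : t.replaceAt p v = some u) (hq : q <+: p) (hne : q ≠ p)
    (hin : t.subAt q = some (.app (Sum.inr b) ws)) :
    cap (F := F) (ar := ar) z t = cap z u := by
  induction q generalizing t u p with
  | nil =>
    simp [Tm.subAt] at hin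
    subst hin
    cases p with
    | nil => exact absurd rfl hne
    | cons i p =>
      simp only [Tm.replaceAt] at h
      split at h
      · cases hu' : (ws ⟨i, ‹_›⟩).replaceAt p v with
        | none => rw [hu'] at h; simp at h
        | some u' => rw [hu'] at h; simp at h; rw [← h]; rfl
      · simp at h
  | cons j q ih =>
    cases p with
    | nil => exact absurd hq (by simp)
    | cons i p =>
      obtain ⟨rfl, hq'⟩ := List.cons_prefix_cons.mp hq
      obtain ⟨f, ts, rfl⟩ := ground_is_app t
      simp only [Tm.replaceAt] at h
      split at h
      · next hi =>
        cases hu' : (ts ⟨j, hi⟩).replaceAt p v with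
        | none => rw [hu'] at h; simp at h
        | some u' =>
          rw [hu'] at h; simp at h
          subst h
          simp only [Tm.subAt, dif_pos hi] at hin
          have hne' : q ≠ p := by rintro rfl; exact hne rfl
          have hcap := ih hu' hq' hne' hin
          cases f with
          | inr b' => rfl
          | inl f =>
            simp only [cap]
            congr 1
            funext j'
            by_cases hj : j' = ⟨j, hi⟩
            · subst hj; erw [Function.update_self]; exact hcap
            · erw [Function.update_of_ne hj]
      · simp at h

theorem lift_occurs {l : Tm F ar V} {x : V} : (liftTm l).occurs x ↔ l.occurs x := by
  induction l with
  | var y => simp [liftTm, Tm.occurs]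
  | app f ts ih =>
    simp only [liftTm, Tm.occurs]
    exact exists_congr (fun i => ih i)

theorem cap_match_pullback [DecidableEq V] {z : V} :
    ∀ (l : Tm F ar V), Linear l → ∀ (s : Tm (F ⊕ Bool) (arExt ar) Empty)
      (σ' : V → Tm F ar V), cap z s = l.subst σ' →
      ∃ σs : V → Tm (F ⊕ Bool) (arExt ar) Empty, s = (liftTm l).subst σs := by
  intro l
  induction l with
  | var x => exact fun _ s σ' _ => ⟨fun _ => s, rfl⟩
  | app f ts ih =>
    intro hlin s σ' hs
    obtain ⟨g, ss, rfl⟩ := ground_is_app s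
    cases g with
    | inr b => simp [cap, Tm.subst] at hs
    | inl g =>
      have hs' := hs.symm
      simp only [cap, Tm.subst, Tm.app.injEq] at hs'
      obtain ⟨rfl, h2⟩ := hs'
      simp only [heq_eq_eq] at h2
      have hch : ∀ i : Fin (ar f), ∃ σs, ss i = (liftTm (ts i)).subst σs := by
        intro i
        exact ih i (linear_child hlin i) (ss i) σ' (congrFun h2 i).symm
      choose σs hσs using hch
      refine ⟨fun x => if h : ∃ i, (ts i).occurs x then σs h.choose x else num F ar 0, ?_⟩
      simp only [liftTm, Tm.subst, Tm.app.injEq, heq_eq_eq, true_and]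
      funext i
      rw [hσs i]
      apply subst_congr
      intro x hx
      have hx' : (ts i).occurs x := lift_occurs.mp hx
      have hex : ∃ j, (ts j).occurs x := ⟨i, hx'⟩
      rw [dif_pos hex]
      obtain rfl : hex.choose = i := linear_unique_child hlin hex.choose_spec hx'
      rfl

theorem cap_redex_pullback [DecidableEq V] {z : V} {R : Set (Rule F ar V)}
    (hQ : QuasiLeftLinear R) {s : Tm (F ⊕ Bool) (arExt ar) Empty}
    (h : IsRedex R (cap z s)) : IsRedex (liftTRS R) s := by
  obtain ⟨lr, hlr, σ', hs⟩ := h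
  by_cases hlin : Linear lr.1
  · obtain ⟨σs, hσs⟩ := cap_match_pullback lr.1 hlin s σ' hs
    exact ⟨(liftTm lr.1, liftTm lr.2), ⟨lr, hlr, rfl⟩, σs, hσs⟩
  · obtain ⟨lr', hlr', hlin', τ, hτ⟩ := hQ lr hlr hlin
    rw [hτ, subst_subst] at hs
    obtain ⟨σs, hσs⟩ := cap_match_pullback lr'.1 hlin' s _ hs
    exact ⟨(liftTm lr'.1, liftTm lr'.2), ⟨lr', hlr', rfl⟩, σs, hσs⟩

end Dir2

section Dir2b
open Stmt

def dep : Tm (F ⊕ Bool) (arExt ar) Empty → ℕ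
  | .var x => x.elim
  | .app (Sum.inl _) ts => Finset.univ.sup (fun i => dep (ts i))
  | .app (Sum.inr _) ts => 1 + Finset.univ.sup (fun i => dep (ts i))

theorem dep_child_le {f : F ⊕ Bool} {ts : Fin (arExt ar f) → Tm (F ⊕ Bool) (arExt ar) Empty}
    (i : Fin (arExt ar f)) : dep (ts i) ≤ dep (Tm.app f ts) := by
  cases f with
  | inl f => exact Finset.le_sup (f := fun i => dep (ts i)) (Finset.mem_univ i)
  | inr b =>
    have h2 : dep (ts i) ≤ Finset.univ.sup (fun i => dep (ts i)) :=
      Finset.le_sup (f := fun i => dep (ts i)) (Finset.mem_univ i)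
    simp only [dep]
    omega

theorem dep_subAt_le {t v : Tm (F ⊕ Bool) (arExt ar) Empty} {p : List ℕ}
    (h : t.subAt p = some v) : dep v ≤ dep t := by
  induction p generalizing t with
  | nil => simp [Tm.subAt] at h; rw [h]
  | cons i p ih =>
    obtain ⟨f, ts, rfl⟩ := ground_is_app t
    simp only [Tm.subAt] at h
    split at h
    · exact le_trans (ih h) (dep_child_le _)
    · simp at h

theorem dep_subst_le {l : Tm F ar V} {σ : V → Tm (F ⊕ Bool) (arExt ar) Empty} {B : ℕ}
    (h : ∀ x, l.occurs x → dep (σ x) ≤ B) : dep ((liftTm l).subst σ) ≤ B := by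
  induction l with
  | var x => exact h x rfl
  | app f ts ih =>
    simp only [liftTm, Tm.subst, dep]
    exact Finset.sup_le (fun i _ => ih i (fun x hx => h x ⟨i, hx⟩))

theorem dep_occurs_le {l : Tm F ar V} {σ : V → Tm (F ⊕ Bool) (arExt ar) Empty} {x : V}
    (h : l.occurs x) : dep (σ x) ≤ dep ((liftTm l).subst σ) := by
  induction l with
  | var y => obtain rfl := h; exact le_refl _
  | app f ts ih =>
    obtain ⟨i, hi⟩ := h
    exact le_trans (ih i hi) (dep_child_le (f := Sum.inl f)
      (ts := fun j => (liftTm (ts j)).subst σ) i)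

theorem dep_replace_le {t v v' u : Tm (F ⊕ Bool) (arExt ar) Empty} {p : List ℕ}
    (hv : t.subAt p = some v) (h : t.replaceAt p v' = some u) (hle : dep v' ≤ dep v) :
    dep u ≤ dep t := by
  induction p generalizing t u with
  | nil =>
    simp [Tm.subAt] at hv
    simp [Tm.replaceAt] at h
    rw [← h, hv]
    exact hle
  | cons i p ih =>
    obtain ⟨f, ts, rfl⟩ := ground_is_app t
    simp only [Tm.subAt] at hv
    simp only [Tm.replaceAt] at h
    split at h <;> split at hv
    · next hi _ =>
      cases hu' : (ts ⟨i, hi⟩).replaceAt p v' with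
      | none => rw [hu'] at h; simp at h
      | some u' =>
        rw [hu'] at h; simp at h
        subst h
        have hd : dep u' ≤ dep (ts ⟨i, hi⟩) := ih hv hu'
        have key : (Finset.univ.sup fun j => dep (Function.update ts ⟨i, hi⟩ u' j)) ≤
            Finset.univ.sup fun j => dep (ts j) := by
          apply Finset.sup_le
          intro j _
          by_cases hj : j = ⟨i, hi⟩
          · subst hj
            rw [Function.update_self]
            exact le_trans hd (Finset.le_sup (f := fun j => dep (ts j)) (Finset.mem_univ _))
          · rw [Function.update_of_ne hj]
            exact Finset.le_sup (f := fun j => dep (ts j)) (Finset.mem_univ _)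
        cases f with
        | inl f => exact key
        | inr b =>
          show dep (Tm.app (Sum.inr b) _) ≤ dep (Tm.app (Sum.inr b) ts)
          simp only [dep]
          omega
    · next h1 h2 => exact absurd h1 h2
    · next h1 h2 => exact absurd h2 h1
    · simp at h

theorem pos_finite (t : Tm F ar V) : {p : List ℕ | (t.subAt p).isSome}.Finite := by
  induction t with
  | var x =>
    apply Set.Finite.subset (Set.finite_singleton ([] : List ℕ))
    intro p hp
    cases p with
    | nil => rfl
    | cons i p => simp [Tm.subAt] at hp
  | app f ts ih =>
    apply Set.Finite.subset
      (Set.Finite.insert ([] : List ℕ)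
        (Set.finite_iUnion (fun i : Fin (ar f) =>
          Set.Finite.image (List.cons i.val) (ih i))))
    intro p hp
    cases p with
    | nil => exact Set.mem_insert _ _
    | cons i p =>
      simp only [Set.mem_setOf_eq, Tm.subAt] at hp
      split at hp
      · next hi =>
        refine Set.mem_insert_of_mem _ (Set.mem_iUnion.mpr ⟨⟨i, hi⟩, ⟨p, hp, rfl⟩⟩)
      · simp at hp

/-- visible `inr`-rooted position -/
def VisInr (t : Tm (F ⊕ Bool) (arExt ar) Empty) (r : List ℕ) : Prop :=
  (∃ b ws, t.subAt r = some (.app (Sum.inr b) ws)) ∧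
  ∀ q, q <+: r → q ≠ r → ∃ f ws, t.subAt q = some (.app (Sum.inl f) ws)

theorem visInr_incomp {t : Tm (F ⊕ Bool) (arExt ar) Empty} {r r' : List ℕ}
    (h : VisInr t r) (h' : VisInr t r') (hne : r ≠ r') : ¬ r <+: r' ∧ ¬ r' <+: r := by
  constructor
  · intro hp
    obtain ⟨f, ws, hf⟩ := h'.2 r hp hne
    obtain ⟨b, ws', hb⟩ := h.1
    rw [hf] at hb
    simp at hb
  · intro hp
    obtain ⟨f, ws, hf⟩ := h.2 r' hp (Ne.symm hne)
    obtain ⟨b, ws', hb⟩ := h'.1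
    rw [hf] at hb
    simp at hb

end Dir2b

section Dir2c
open Stmt

theorem pfx_lt_length {q r : List ℕ} (h : q <+: r) (hne : q ≠ r) : q.length < r.length :=
  lt_of_le_of_ne h.length_le (fun he => hne (h.eq_of_length he))

theorem dep_step_le {R : Set (Rule F ar V)} (hTRS : IsTRS R) {p : List ℕ}
    {t u : Tm (F ⊕ Bool) (arExt ar) Empty}
    (h : RewAt (liftTRS R) p t u) : dep u ≤ dep t := by
  obtain ⟨lr', hlr', σ, hsub, hrep⟩ := h
  obtain ⟨lr, hlr, rfl⟩ := hlr'
  refine dep_replace_le hsub hrep ?_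
  apply dep_subst_le
  intro x hx
  exact le_trans (dep_occurs_le ((hTRS lr hlr).2 x hx)) (le_refl _)

theorem frz {R : Set (Rule F ar V)} (hTRS : IsTRS R) {p : List ℕ}
    {t u : Tm (F ⊕ Bool) (arExt ar) Empty} (hstep : RewAt (liftTRS R) p t u)
    {qb : List ℕ} (hqb : qb <+: p) (hqbne : qb ≠ p)
    {b0 : Bool} {ws0 : Fin (arExt ar (Sum.inr b0)) → Tm (F ⊕ Bool) (arExt ar) Empty}
    (hin : t.subAt qb = some (.app (Sum.inr b0) ws0)) :
    ∀ r, VisInr t r ↔ VisInr u r := by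
  obtain ⟨lr', hlr', σ, hsub, hrep⟩ := hstep
  obtain ⟨lr, hlr, rfl⟩ := hlr'
  have hlroot : ∃ f0 ws, t.subAt p = some (.app (Sum.inl f0) ws) := by
    cases hl : lr.1 with
    | var x => exact absurd hl ((hTRS lr hlr).1 x)
    | app f0 ts0 => exact ⟨f0, _, by rw [hsub, hl]; rfl⟩
  have ROOTS : ∀ q, q <+: p → q ≠ p →
      ∃ w w', t.subAt q = some w ∧ u.subAt q = some w' ∧ w.rootSym = w'.rootSym := by
    intro q hq hne
    obtain ⟨w, hw⟩ := subAt_prefix hq hsub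
    obtain ⟨w', hw', hroot⟩ := replaceAt_prefix_root hrep hq hne hw
    exact ⟨w, w', hw, hw', hroot⟩
  have hval : ∀ r, ¬ r <+: p → ¬ p <+: r → u.subAt r = t.subAt r :=
    fun r h1 h2 => replaceAt_incomp hrep h2 h1
  intro r
  constructor
  · rintro ⟨⟨b, ws, hb⟩, hpref⟩
    by_cases hrp : r <+: p
    · by_cases hre : r = p
      · subst hre
        obtain ⟨f0, ws1, hf0⟩ := hlroot
        rw [hb] at hf0
        simp at hf0
      · constructor
        · obtain ⟨w, w', hw, hw', hroot⟩ := ROOTS r hrp hre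
          rw [hw] at hb
          obtain rfl : w = Tm.app (Sum.inr b) ws := by injection hb
          obtain ⟨g, ws2, rfl⟩ := ground_is_app w'
          simp only [Tm.rootSym, Option.some.injEq] at hroot
          subst hroot
          exact ⟨b, ws2, hw'⟩
        · intro q hq hqne
          have hqp : q <+: p := hq.trans hrp
          have hqnep : q ≠ p := by
            intro hh; subst hh
            have := lt_of_lt_of_le (pfx_lt_length hq hqne) hrp.length_le
            omega
          obtain ⟨w, w', hw, hw', hroot⟩ := ROOTS q hqp hqnep
          obtain ⟨f1, ws1, hf1⟩ := hpref q hq hqne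
          rw [hw] at hf1
          obtain rfl : w = Tm.app (Sum.inl f1) ws1 := by injection hf1
          obtain ⟨g, ws2, rfl⟩ := ground_is_app w'
          simp only [Tm.rootSym, Option.some.injEq] at hroot
          subst hroot
          exact ⟨f1, ws2, hw'⟩
    · by_cases hpr : p <+: r
      · exfalso
        have hqbr : qb <+: r := hqb.trans hpr
        have hqbner : qb ≠ r := by
          have h1 := pfx_lt_length hqb hqbne
          have h2 := hpr.length_le
          intro hh; subst hh; omega
        obtain ⟨f1, ws1, hf1⟩ := hpref qb hqbr hqbner
        rw [hin] at hf1
        simp at hf1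
      · refine ⟨⟨b, ws, by rw [hval r hrp hpr, hb]⟩, ?_⟩
        intro q hq hqne
        by_cases hqp : q <+: p
        · have hqnep : q ≠ p := by rintro rfl; exact hpr hq
          obtain ⟨w, w', hw, hw', hroot⟩ := ROOTS q hqp hqnep
          obtain ⟨f1, ws1, hf1⟩ := hpref q hq hqne
          rw [hw] at hf1
          obtain rfl : w = Tm.app (Sum.inl f1) ws1 := by injection hf1
          obtain ⟨g, ws2, rfl⟩ := ground_is_app w'
          simp only [Tm.rootSym, Option.some.injEq] at hroot
          subst hroot
          exact ⟨f1, ws2, hw'⟩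
        · have hpq : ¬ p <+: q := fun hh => hpr (hh.trans hq)
          obtain ⟨f1, ws1, hf1⟩ := hpref q hq hqne
          exact ⟨f1, ws1, by rw [hval q hqp hpq, hf1]⟩
  · rintro ⟨⟨b, ws, hb⟩, hpref⟩
    by_cases hrp : r <+: p
    · by_cases hre : r = p
      · exfalso
        subst hre
        obtain ⟨w, w', hw, hw', hroot⟩ := ROOTS qb hqb hqbne
        rw [hin] at hw
        obtain rfl : w = Tm.app (Sum.inr b0) ws0 := by injection hw with h; exact h.symm
        obtain ⟨f1, ws1, hf1⟩ := hpref qb hqb hqbne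
        rw [hw'] at hf1
        obtain rfl : w' = Tm.app (Sum.inl f1) ws1 := by injection hf1
        simp [Tm.rootSym] at hroot
      · constructor
        · obtain ⟨w, w', hw, hw', hroot⟩ := ROOTS r hrp hre
          rw [hw'] at hb
          obtain rfl : w' = Tm.app (Sum.inr b) ws := by injection hb
          obtain ⟨g, ws2, rfl⟩ := ground_is_app w
          simp only [Tm.rootSym, Option.some.injEq] at hroot
          subst hroot
          exact ⟨b, ws2, hw⟩
        · intro q hq hqne
          have hqp : q <+: p := hq.trans hrp
          have hqnep : q ≠ p := by
            intro hh; subst hh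
            have := lt_of_lt_of_le (pfx_lt_length hq hqne) hrp.length_le
            omega
          obtain ⟨w, w', hw, hw', hroot⟩ := ROOTS q hqp hqnep
          obtain ⟨f1, ws1, hf1⟩ := hpref q hq hqne
          rw [hw'] at hf1
          obtain rfl : w' = Tm.app (Sum.inl f1) ws1 := by injection hf1
          obtain ⟨g, ws2, rfl⟩ := ground_is_app w
          simp only [Tm.rootSym, Option.some.injEq] at hroot
          subst hroot
          exact ⟨f1, ws2, hw⟩
    · by_cases hpr : p <+: r
      · exfalso
        have hqbr : qb <+: r := hqb.trans hpr
        have hqbner : qb ≠ r := by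
          have h1 := pfx_lt_length hqb hqbne
          have h2 := hpr.length_le
          intro hh; subst hh; omega
        obtain ⟨f1, ws1, hf1⟩ := hpref qb hqbr hqbner
        obtain ⟨w, w', hw, hw', hroot⟩ := ROOTS qb hqb hqbne
        rw [hin] at hw
        obtain rfl : w = Tm.app (Sum.inr b0) ws0 := by injection hw with h; exact h.symm
        rw [hw'] at hf1
        obtain rfl : w' = Tm.app (Sum.inl f1) ws1 := by injection hf1
        simp [Tm.rootSym] at hroot
      · refine ⟨⟨b, ws, by rw [← hval r hrp hpr, hb]⟩, ?_⟩
        intro q hq hqne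
        by_cases hqp : q <+: p
        · have hqnep : q ≠ p := by rintro rfl; exact hpr hq
          obtain ⟨w, w', hw, hw', hroot⟩ := ROOTS q hqp hqnep
          obtain ⟨f1, ws1, hf1⟩ := hpref q hq hqne
          rw [hw'] at hf1
          obtain rfl : w' = Tm.app (Sum.inl f1) ws1 := by injection hf1
          obtain ⟨g, ws2, rfl⟩ := ground_is_app w
          simp only [Tm.rootSym, Option.some.injEq] at hroot
          subst hroot
          exact ⟨f1, ws2, hw⟩
        · have hpq : ¬ p <+: q := fun hh => hpr (hh.trans hq)
          obtain ⟨f1, ws1, hf1⟩ := hpref q hq hqne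
          exact ⟨f1, ws1, by rw [← hval q hqp hpq, hf1]⟩

theorem cap_ostep [DecidableEq V] {z : V} {R : Set (Rule F ar V)} (hQ : QuasiLeftLinear R)
    {p : List ℕ} {t u : Tm (F ⊕ Bool) (arExt ar) Empty}
    (h : OutAt (liftTRS R) p t u) (hno : NoInrPfx t p) :
    OStep R (cap z t) (cap z u) := by
  obtain ⟨⟨lr', hlr', σ, hsub, hrep⟩, hout⟩ := h
  obtain ⟨lr, hlr, rfl⟩ := hlr'
  refine ⟨p, ⟨lr, hlr, fun x => cap z (σ x), ?_, ?_⟩, ?_⟩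
  · rw [cap_subAt hsub hno, cap_subst]
  · have h2 := cap_replaceAt (z := z) hrep hno
    rwa [cap_subst] at h2
  · intro q hq hne s' hs' hred
    obtain ⟨v, hv⟩ := subAt_prefix hq hsub
    have h3 := cap_subAt (z := z) hv (noInrPfx_of_prefix hno hq)
    rw [hs'] at h3
    obtain rfl : s' = cap z v := by injection h3
    exact hout q hq hne v hv (cap_redex_pullback hQ hred)

end Dir2c

section Assemble
open Stmt

theorem prefix_comparable {l q1 q2 : List ℕ} (h1 : q1 <+: l) (h2 : q2 <+: l) :
    q1 <+: q2 ∨ q2 <+: q1 := by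
  rcases le_total q1.length q2.length with h | h
  · left
    rw [List.prefix_iff_eq_take.mp h1, List.prefix_iff_eq_take.mp h2]
    exact List.take_isPrefix_take.mpr (Or.inl h)
  · right
    rw [List.prefix_iff_eq_take.mp h1, List.prefix_iff_eq_take.mp h2]
    exact List.take_isPrefix_take.mpr (Or.inl h)

theorem subseq_enum {P : ℕ → Prop} (hP : ∀ a, ∃ n, a ≤ n ∧ P n) :
    ∃ e : ℕ → ℕ, (∀ k, P (e k)) ∧ (∀ k, e k < e (k + 1)) ∧
      (∀ k m, e k < m → m < e (k + 1) → ¬ P m) := by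
  classical
  have hfind : ∀ a, a ≤ Nat.find (hP a) ∧ P (Nat.find (hP a)) := fun a => Nat.find_spec (hP a)
  refine ⟨fun k => Nat.rec (Nat.find (hP 0)) (fun _ prev => Nat.find (hP (prev + 1))) k,
    ?_, ?_, ?_⟩
  · intro k
    cases k with
    | zero => exact (hfind 0).2
    | succ k => exact (hfind _).2
  · intro k
    exact lt_of_lt_of_le (Nat.lt_succ_self _) (hfind _).1
  · intro k m h1 h2 hPm
    exact Nat.find_min (hP _) h2 ⟨h1, hPm⟩

theorem step_root_inl {R : Set (Rule F ar V)} (hTRS : IsTRS R) {p : List ℕ}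
    {t u : Tm (F ⊕ Bool) (arExt ar) Empty}
    (h : RewAt (liftTRS R) p t u) : ∃ f ws, t.subAt p = some (Tm.app (Sum.inl f) ws) := by
  obtain ⟨lr', hlr', σ, hsub, hrep⟩ := h
  obtain ⟨lr, hlr, rfl⟩ := hlr'
  cases hl : lr.1 with
  | var x => exact absurd hl ((hTRS lr hlr).1 x)
  | app f0 ts0 => exact ⟨f0, _, by rw [hsub, hl]; rfl⟩

theorem dir2_main [DecidableEq V] {R : Set (Rule F ar V)} (hTRS : IsTRS R)
    (hQ : QuasiLeftLinear R) (z : V) :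
    ∀ D : ℕ, ∀ g : ℕ → Tm (F ⊕ Bool) (arExt ar) Empty,
      (∀ n, OStep (liftTRS R) (g n) (g (n + 1))) → dep (g 0) < D →
      ∃ h : ℕ → Tm F ar V, ∀ n, OStep R (h n) (h (n + 1)) := by
  intro D
  induction D with
  | zero => intro g hg h0; omega
  | succ D IH =>
    intro g hg hdep
    have hout : ∀ n, OutAt (liftTRS R) ((hg n).choose) (g n) (g (n + 1)) :=
      fun n => (hg n).choose_spec
    by_cases hA : ∀ a : ℕ, ∃ n, a ≤ n ∧ NoInrPfx (g n) ((hg n).choose)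
    · -- Case A : infinitely many visible steps
      obtain ⟨e, he1, he2, he3⟩ := subseq_enum hA
      have hstut : ∀ m, ¬ NoInrPfx (g m) ((hg m).choose) →
          cap (F := F) (ar := ar) z (g m) = cap z (g (m + 1)) := by
        intro m hm
        unfold NoInrPfx at hm
        push_neg at hm
        obtain ⟨q, hq1, hq2, b, ws, hq3⟩ := hm
        obtain ⟨lr', hlr', σ, hsub, hrep⟩ := (hout m).1
        exact cap_stutter hrep hq1 hq2 hq3
      have hchain : ∀ a b : ℕ, a ≤ b →
          (∀ m, a ≤ m → m < b → ¬ NoInrPfx (g m) ((hg m).choose)) →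
          cap (F := F) (ar := ar) z (g a) = cap z (g b) := by
        intro a b hab
        induction b, hab using Nat.le_induction with
        | base => exact fun _ => rfl
        | succ b hab ih =>
          intro hmid
          rw [ih (fun m hm1 hm2 => hmid m hm1 (by omega))]
          exact hstut b (hmid b hab (by omega))
      refine ⟨fun k => cap z (g (e k)), fun k => ?_⟩
      have hstep := cap_ostep (z := z) hQ (hout (e k)) (he1 k)
      have heq : cap (F := F) (ar := ar) z (g (e k + 1)) = cap z (g (e (k + 1))) :=
        hchain _ _ (he2 k) (fun m h1 h2 => he3 k m (by omega) h2)
      rwa [heq] at hstep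
    · -- Case B : eventually all steps are inside aliens
      push_neg at hA
      obtain ⟨N, hN⟩ := hA
      classical
      -- minimal inr-rooted prefix of the redex position
      have hPB : ∀ n, N ≤ n → ∃ k, (∃ b ws, (g n).subAt (List.take k ((hg n).choose)) =
          some (Tm.app (Sum.inr b) ws)) ∧ k ≤ ((hg n).choose).length := by
        intro n hn
        have hm := hN n hn
        unfold NoInrPfx at hm
        push_neg at hm
        obtain ⟨q, hq1, hq2, b, ws, hq3⟩ := hm
        exact ⟨q.length, ⟨b, ws, by rwa [← List.prefix_iff_eq_take.mp hq1]⟩, hq1.length_le⟩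
      set kk : ℕ → ℕ := fun n => if h : ∃ k, (∃ b ws, (g n).subAt (List.take k ((hg n).choose)) =
          some (Tm.app (Sum.inr b) ws)) ∧ k ≤ ((hg n).choose).length then Nat.find h else 0
        with hkkdef
      have hkk_spec : ∀ n, N ≤ n → (∃ b ws, (g n).subAt (List.take (kk n) ((hg n).choose)) =
          some (Tm.app (Sum.inr b) ws)) ∧ kk n ≤ ((hg n).choose).length := by
        intro n hn
        rw [hkkdef]
        simp only [dif_pos (hPB n hn)]
        exact Nat.find_spec (hPB n hn)
      have hkk_min : ∀ n, N ≤ n → ∀ j, j < kk n →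
          ¬ ((∃ b ws, (g n).subAt (List.take j ((hg n).choose)) =
            some (Tm.app (Sum.inr b) ws)) ∧ j ≤ ((hg n).choose).length) := by
        intro n hn j hj
        rw [hkkdef] at hj
        simp only [dif_pos (hPB n hn)] at hj
        exact Nat.find_min (hPB n hn) hj
      have hqpfx : ∀ n, List.take (kk n) ((hg n).choose) <+: (hg n).choose :=
        fun n => List.take_prefix _ _
      have hqlen : ∀ n, N ≤ n → (List.take (kk n) ((hg n).choose)).length = kk n := by
        intro n hn
        have := (hkk_spec n hn).2
        simp [List.length_take]
        omega
      have hqne : ∀ n, N ≤ n → List.take (kk n) ((hg n).choose) ≠ (hg n).choose := by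
        intro n hn he
        obtain ⟨f0, ws0, hf0⟩ := step_root_inl hTRS (hout n).1
        obtain ⟨b, ws, hb⟩ := (hkk_spec n hn).1
        rw [he, hf0] at hb
        simp at hb
      have hVq : ∀ n, N ≤ n → VisInr (g n) (List.take (kk n) ((hg n).choose)) := by
        intro n hn
        refine ⟨(hkk_spec n hn).1, ?_⟩
        intro q' hq' hne'
        have hq'p : q' <+: (hg n).choose := hq'.trans (hqpfx n)
        have hq'len : q'.length < kk n := by
          have := pfx_lt_length hq' hne'
          rw [hqlen n hn] at this
          exact this
        have hq'take : q' = List.take q'.length ((hg n).choose) :=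
          List.prefix_iff_eq_take.mp hq'p
        obtain ⟨f0, ws0, hf0⟩ := step_root_inl hTRS (hout n).1
        obtain ⟨v, hv⟩ := subAt_prefix hq'p hf0
        obtain ⟨fv, wsv, rfl⟩ := ground_is_app v
        cases fv with
        | inl f1 => exact ⟨f1, wsv, hv⟩
        | inr b1 =>
          exfalso
          refine hkk_min n hn q'.length hq'len ⟨⟨b1, wsv, ?_⟩, ?_⟩
          · rw [← hq'take]; exact hv
          · have := hq'p.length_le; omega
      have hfrz2 : ∀ n, N ≤ n → ∀ r, (VisInr (g n) r ↔ VisInr (g N) r) := by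
        intro n hn
        induction n, hn using Nat.le_induction with
        | base => exact fun r => Iff.rfl
        | succ n hn ih =>
          intro r
          obtain ⟨b, ws, hb⟩ := (hkk_spec n hn).1
          have := frz hTRS (hout n).1 (hqpfx n) (hqne n hn) hb
          exact (this r).symm.trans (ih r)
      -- pigeonhole
      have hpig : ∃ qs, VisInr (g N) qs ∧
          {n | N ≤ n ∧ List.take (kk n) ((hg n).choose) = qs}.Infinite := by
        by_contra hcon
        push_neg at hcon
        have hsub : {n : ℕ | N ≤ n} ⊆
            ⋃ r ∈ {r | VisInr (g N) r}, {n | N ≤ n ∧ List.take (kk n) ((hg n).choose) = r} := by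
          intro n hn
          have hvr : VisInr (g N) (List.take (kk n) ((hg n).choose)) :=
            (hfrz2 n hn _).mp (hVq n hn)
          exact Set.mem_biUnion hvr ⟨hn, rfl⟩
        have hfinB : {r | VisInr (g N) r}.Finite := by
          apply (pos_finite (g N)).subset
          intro r hr
          obtain ⟨b, ws, hb⟩ := hr.1
          simp [Set.mem_setOf_eq, hb]
        have hfin : {n : ℕ | N ≤ n}.Finite :=
          (hfinB.biUnion (fun r hr => (hcon r hr))).subset hsub
        have hinf : {n : ℕ | N ≤ n}.Infinite := by
          apply Set.infinite_of_forall_exists_gt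
          intro a
          exact ⟨N + a + 1, by simp only [Set.mem_setOf_eq]; omega, by omega⟩
        exact hinf hfin
      obtain ⟨qs, hqsVis, hqsInf⟩ := hpig
      obtain ⟨e, he1, he2, he3⟩ := subseq_enum
        (P := fun n => N ≤ n ∧ List.take (kk n) ((hg n).choose) = qs) (fun a => by
          obtain ⟨n, hn, hna⟩ := hqsInf.exists_gt a
          exact ⟨n, le_of_lt hna, hn⟩)
      -- the position below the alien root
      have hQstep : ∀ k, ∃ rest, (hg (e k)).choose = (qs ++ [0]) ++ rest := by
        intro k
        obtain ⟨hNk, hqqk⟩ := he1 k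
        obtain ⟨b, ws, hb⟩ := (hkk_spec (e k) hNk).1
        rw [hqqk] at hb
        have hpfx : qs <+: (hg (e k)).choose := hqqk ▸ hqpfx (e k)
        have hne : qs ≠ (hg (e k)).choose := hqqk ▸ hqne (e k) hNk
        obtain ⟨rest, hrest⟩ := hpfx
        cases rest with
        | nil => rw [List.append_nil] at hrest; exact absurd hrest hne
        | cons j rest' =>
          obtain ⟨f0, ws0, hf0⟩ := step_root_inl hTRS (hout (e k)).1
          have hpfx2 : qs ++ [j] <+: (hg (e k)).choose :=
            ⟨rest', by rw [List.append_assoc, List.singleton_append, hrest]⟩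
          obtain ⟨v, hv⟩ := subAt_prefix hpfx2 hf0
          rw [subAt_append, hb] at hv
          simp only [Option.bind_some] at hv
          simp only [Tm.subAt] at hv
          split at hv
          · next hj =>
            have hb1 : b = true := by
              cases b
              · exact absurd hj (by simp [arExt])
              · rfl
            subst hb1
            have hj0 : j = 0 := by
              have : j < 1 := hj
              omega
            subst hj0
            exact ⟨rest', by rw [List.append_assoc, List.singleton_append, hrest]⟩
          · simp at hv
      have hQsub : ∀ k, ∃ v, (g (e k)).subAt (qs ++ [0]) = some v := by
        intro k
        obtain ⟨rest, hrest⟩ := hQstep k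
        obtain ⟨f0, ws0, hf0⟩ := step_root_inl hTRS (hout (e k)).1
        exact subAt_prefix ⟨rest, hrest.symm⟩ hf0
      -- gap invariance
      have hgap : ∀ m, N ≤ m → List.take (kk m) ((hg m).choose) ≠ qs →
          (g (m + 1)).subAt (qs ++ [0]) = (g m).subAt (qs ++ [0]) := by
        intro m hm hnem
        have hV1 : VisInr (g m) (List.take (kk m) ((hg m).choose)) := hVq m hm
        have hV2 : VisInr (g m) qs := (hfrz2 m hm qs).mpr hqsVis
        obtain ⟨hic1, hic2⟩ := visInr_incomp hV1 hV2 hnem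
        have h1 : ¬ qs <+: (hg m).choose := by
          intro hcon
          rcases prefix_comparable hcon (hqpfx m) with h | h
          · exact hic2 h
          · exact hic1 h
        have h2 : ¬ (hg m).choose <+: qs := fun hcon => hic1 ((hqpfx m).trans hcon)
        have h3 : ¬ (qs ++ [0]) <+: (hg m).choose :=
          fun hcon => h1 ((List.prefix_append qs [0]).trans hcon)
        have h4 : ¬ (hg m).choose <+: (qs ++ [0]) := by
          intro hcon
          rcases prefix_comparable hcon (List.prefix_append qs [0]) with h | h
          · exact h2 h
          · exact h1 h
        obtain ⟨lr', hlr', σ, hsub, hrep⟩ := (hout m).1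
        exact replaceAt_incomp hrep h4 h3
      have hchain2 : ∀ a b : ℕ, a ≤ b → N ≤ a →
          (∀ m, a ≤ m → m < b → List.take (kk m) ((hg m).choose) ≠ qs) →
          (g b).subAt (qs ++ [0]) = (g a).subAt (qs ++ [0]) := by
        intro a b hab hNa
        induction b, hab using Nat.le_induction with
        | base => exact fun _ => rfl
        | succ b hab ih =>
          intro hmid
          rw [hgap b (le_trans hNa hab) (hmid b hab (by omega)),
            ih (fun m hm1 hm2 => hmid m hm1 (by omega))]
      -- the projected sequence
      have hvstep : ∀ k, OStep (liftTRS R)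
          ((hQsub k).choose) ((hQsub (k + 1)).choose) := by
        intro k
        obtain ⟨rest, hrest⟩ := hQstep k
        obtain ⟨⟨lr', hlr', σ, hsub, hrep⟩, houtk⟩ := hout (e k)
        have hvk := (hQsub k).choose_spec
        have hsubv : ((hQsub k).choose).subAt rest = some (Tm.subst σ lr'.1) := by
          rw [hrest, subAt_append, hvk] at hsub
          simpa using hsub
        obtain ⟨w', hw1, hw2⟩ := replaceAt_append_decomp hvk (by rw [← hrest]; exact hrep)
        have hchainv : (g (e (k + 1))).subAt (qs ++ [0]) =
            (g (e k + 1)).subAt (qs ++ [0]) := by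
          apply hchain2 (e k + 1) (e (k + 1)) (he2 k) (by have := (he1 k).1; omega)
          intro m hm1 hm2 hqm
          exact he3 k m (by omega) hm2 ⟨by have := (he1 k).1; omega, hqm⟩
        have hvk1 := (hQsub (k + 1)).choose_spec
        have heqv : some ((hQsub (k + 1)).choose) = some w' := by
          rw [← hvk1, hchainv, hw2]
        obtain hw : (hQsub (k + 1)).choose = w' := by injection heqv
        refine ⟨rest, ⟨lr', hlr', σ, hsubv, by rw [hw]; exact hw1⟩, ?_⟩
        intro r hr hner s' hs' hred
        have hsg : (g (e k)).subAt ((qs ++ [0]) ++ r) = some s' := by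
          rw [subAt_append, hvk]
          simpa using hs'
        refine houtk ((qs ++ [0]) ++ r) ?_ ?_ s' hsg hred
        · rw [hrest]
          obtain ⟨rr, hrr⟩ := hr
          exact ⟨rr, by rw [List.append_assoc, hrr]⟩
        · intro hcon
          rw [hrest] at hcon
          exact hner (List.append_cancel_left hcon)
      -- depth decrease
      refine IH (fun k => (hQsub k).choose) hvstep ?_
      show dep ((hQsub 0).choose) < D
      obtain ⟨hN0, hqq0⟩ := he1 0
      obtain ⟨b, ws, hb⟩ := (hkk_spec (e 0) hN0).1
      rw [hqq0] at hb
      have hvv0 := (hQsub 0).choose_spec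
      set v0 := (hQsub 0).choose with hv0def
      rw [subAt_append, hb] at hvv0
      simp only [Option.bind_some, Tm.subAt] at hvv0
      have hmono : ∀ n, dep (g n) ≤ dep (g 0) := by
        intro n
        induction n with
        | zero => exact le_refl _
        | succ n ih => exact le_trans (dep_step_le hTRS (hout n).1) ih
      have hdepv : dep v0 < dep (Tm.app (Sum.inr b) ws) := by
        split at hvv0
        · next hj =>
          have hvveq : ws ⟨0, hj⟩ = v0 := by
            simpa [Tm.subAt] using hvv0
          have hle : dep (ws ⟨0, hj⟩) ≤ Finset.univ.sup (fun i => dep (ws i)) :=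
            Finset.le_sup (f := fun i => dep (ws i)) (Finset.mem_univ _)
          rw [← hvveq]
          simp only [dep]
          omega
        · simp at hvv0
      have h1 := dep_subAt_le hb
      have h2 := hmono (e 0)
      omega

end Assemble

end TRSAux

/-- Lemma 5.15: `R` is outermost terminating (on open terms over `Σ`)
    if `R` over `Σ ∪ {s, 0}` is outermost ground terminating; for quasi-left-linear
    `R` the converse holds as well. -/
theorem outermost_ground_vs_open {F : Type} {ar : F → ℕ} {V : Type}
    [DecidableEq V] [Countable V] [Infinite V]
    (R : Set (Rule F ar V)) (hTRS : IsTRS R) (hfin : R.Finite) :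
    ((¬ ∃ g : ℕ → TRSStmt.Tm (F ⊕ Bool) (arExt ar) Empty,
        ∀ n, OStep (liftTRS R) (g n) (g (n + 1))) →
      (¬ ∃ g : ℕ → TRSStmt.Tm F ar V, ∀ n, OStep R (g n) (g (n + 1)))) ∧
    (QuasiLeftLinear R →
      (¬ ∃ g : ℕ → TRSStmt.Tm F ar V, ∀ n, OStep R (g n) (g (n + 1))) →
      (¬ ∃ g : ℕ → TRSStmt.Tm (F ⊕ Bool) (arExt ar) Empty,
        ∀ n, OStep (liftTRS R) (g n) (g (n + 1)))) := by
  constructor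
  · rintro hgr ⟨g, hg⟩
    obtain ⟨φ, hφ⟩ := exists_injective_nat V
    exact hgr ⟨fun n => TRSAux.enc φ (g n), fun n => TRSAux.enc_ostep hφ (hg n)⟩
  · rintro hQ hopen ⟨g, hg⟩
    obtain ⟨h, hh⟩ := TRSAux.dir2_main hTRS hQ (Classical.arbitrary V)
      (TRSAux.dep (g 0) + 1) g hg (by omega)
    exact hopen ⟨h, hh⟩

end Stmt
end
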